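/- arXiv:0903.4527 — 9 statements merged into one kernel-verified Lean document; each statement's English description precedes it below -/
import Mathlib

section
/- For every natural number n ≥ 0 and every real ξ > 0, f_n(ξ − ξ⁻¹) = (ξ^{n−1} − (−1)^{n−1} ξ^{1−n}) / (ξ + ξ⁻¹). -/
/-- The polynomials `f_n` defined by `f_0 = 1`, `f_1 = 0`,
`f_{n+1}(x) = x f_n(x) + f_{n-1}(x)` (a transformation of the
Chebyshev polynomials of the second kind). -/
def chebF : ℕ → ℝ → ℝ
  | 0, _ => 1
  | 1, _ => 0
  | n + 2, x => x * chebF (n + 1) x + chebF n x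

theorem stmt_0 (n : ℕ) (ξ : ℝ) (hξ : 0 < ξ) :
    chebF n (ξ - ξ⁻¹) =
      (ξ ^ ((n : ℤ) - 1) - (-1 : ℝ) ^ ((n : ℤ) - 1) * ξ ^ (1 - (n : ℤ))) / (ξ + ξ⁻¹) := by
  have hξ0 : ξ ≠ 0 := hξ.ne'
  have hD : (0:ℝ) < ξ + ξ⁻¹ := by positivity
  induction n using Nat.twoStepInduction with
  | zero =>
    simp [chebF]
    field_simp
    ring
  | one =>
    simp [chebF]
  | more n ih1 ih2 =>
    have key : chebF (n+2) (ξ - ξ⁻¹)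
        = (ξ - ξ⁻¹) * chebF (n+1) (ξ - ξ⁻¹) + chebF n (ξ - ξ⁻¹) := rfl
    rw [key, ih1, ih2]
    push_cast
    have h1 : ξ ^ ((n:ℤ)+2-1) = ξ ^ ((n:ℤ)-1) * ξ * ξ := by
      rw [show (n:ℤ)+2-1 = ((n:ℤ)-1)+1+1 by ring, zpow_add_one₀ hξ0, zpow_add_one₀ hξ0]
    have h2 : ξ ^ ((n:ℤ)+1-1) = ξ ^ ((n:ℤ)-1) * ξ := by
      rw [show (n:ℤ)+1-1 = ((n:ℤ)-1)+1 by ring, zpow_add_one₀ hξ0]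
    have h3 : ξ ^ (1-((n:ℤ)+2)) = (ξ ^ ((n:ℤ)-1))⁻¹ * ξ⁻¹ * ξ⁻¹ := by
      rw [show 1-((n:ℤ)+2) = -((n:ℤ)-1) + (-1) + (-1) by ring,
        zpow_add₀ hξ0, zpow_add₀ hξ0, zpow_neg, zpow_neg_one]
    have h4 : ξ ^ (1-((n:ℤ)+1)) = (ξ ^ ((n:ℤ)-1))⁻¹ * ξ⁻¹ := by
      rw [show 1-((n:ℤ)+1) = -((n:ℤ)-1) + (-1) by ring,
        zpow_add₀ hξ0, zpow_neg, zpow_neg_one]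
    have h5 : ξ ^ (1-(n:ℤ)) = (ξ ^ ((n:ℤ)-1))⁻¹ := by
      rw [show 1-(n:ℤ) = -((n:ℤ)-1) by ring, zpow_neg]
    have s1 : (-1:ℝ) ^ ((n:ℤ)+2-1) = (-1:ℝ) ^ ((n:ℤ)-1) * (-1) * (-1) := by
      rw [show (n:ℤ)+2-1 = ((n:ℤ)-1)+1+1 by ring,
        zpow_add_one₀ (by norm_num : (-1:ℝ) ≠ 0), zpow_add_one₀ (by norm_num : (-1:ℝ) ≠ 0)]
    have s2 : (-1:ℝ) ^ ((n:ℤ)+1-1) = (-1:ℝ) ^ ((n:ℤ)-1) * (-1) := by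
      rw [show (n:ℤ)+1-1 = ((n:ℤ)-1)+1 by ring, zpow_add_one₀ (by norm_num : (-1:ℝ) ≠ 0)]
    rw [h1, h2, h3, h4, h5, s1, s2]
    have ha : ξ ^ ((n:ℤ)-1) ≠ 0 := zpow_ne_zero _ hξ0
    field_simp
    ring
end

section
/- Let {ξ_i}_{i∈V} be positive reals and {β_ij}_{ij∈E} arbitrary reals. Then Σ_{x : V → {±1}} ∏_{ij∈E} (1 + x_i x_j β_ij ξ_i^{−x_i} ξ_j^{−x_j}) ∏_{i∈V} ξ_i^{x_i}/(ξ_i + ξ_i⁻¹) = Σ_{s ⊆ E} ∏_{ij∈s} β_ij ∏_{i∈V} f_{d_i(s)}(ξ_i − ξ_i⁻¹). -/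
/-- The spin `+1` or `-1` associated to a Boolean. -/
def sgn (b : Bool) : ℤ := if b then 1 else -1

/-- `deg ep1 ep2 i s` is the number of edges in `s` incident to the node `i`,
where the two endpoints of an edge `e` are `ep1 e` and `ep2 e`. -/
def deg {V E : Type} [DecidableEq V] [DecidableEq E] (ep1 ep2 : E → V) (i : V)
    (s : Finset E) : ℕ :=
  (s.filter fun e => ep1 e = i ∨ ep2 e = i).card

lemma chebF_mul (ξ : ℝ) (hξ : ξ ≠ 0) (d : ℕ) :
    chebF d (ξ - ξ⁻¹) * (ξ + ξ⁻¹) = (-1)^d * ξ * (ξ⁻¹)^d + ξ⁻¹ * ξ^d := by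
  have h : ξ * ξ⁻¹ = 1 := mul_inv_cancel₀ hξ
  induction d using Nat.twoStepInduction with
  | zero => simp [chebF]
  | one => show (0:ℝ) * (ξ + ξ⁻¹) = _; ring
  | more n ih0 ih1 =>
    show ((ξ - ξ⁻¹) * chebF (n+1) (ξ - ξ⁻¹) + chebF n (ξ - ξ⁻¹)) * (ξ + ξ⁻¹) = _
    linear_combination (ξ - ξ⁻¹) * ih1 + ih0 -
      (((-1:ℝ)^n * ξ * (ξ⁻¹)^n + ξ^n * ξ⁻¹)) * h

lemma prod_deg {V E : Type} [Fintype V] [DecidableEq V] [Fintype E] [DecidableEq E]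
    (ep1 ep2 : E → V) (hloop : ∀ e, ep1 e ≠ ep2 e) (h : V → ℝ) (s : Finset E) :
    ∏ e ∈ s, h (ep1 e) * h (ep2 e) = ∏ i : V, h i ^ deg ep1 ep2 i s := by
  induction s using Finset.induction with
  | empty => simp [deg]
  | @insert a s ha ih =>
    have hdeg : ∀ i, deg ep1 ep2 i (insert a s)
        = (if ep1 a = i ∨ ep2 a = i then 1 else 0) + deg ep1 ep2 i s := by
      intro i
      simp only [deg, Finset.filter_insert]
      split
      · rw [Finset.card_insert_of_notMem (fun hm => ha (Finset.mem_of_mem_filter _ hm))]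
        omega
      · omega
    rw [Finset.prod_insert ha, ih]
    simp only [hdeg, pow_add]
    rw [Finset.prod_mul_distrib]
    congr 1
    have : ∀ i : V, h i ^ (if ep1 a = i ∨ ep2 a = i then 1 else 0)
        = if i ∈ ({ep1 a, ep2 a} : Finset V) then h i else 1 := by
      intro i
      by_cases hc : ep1 a = i ∨ ep2 a = i
      · simp only [if_pos hc, Finset.mem_insert, Finset.mem_singleton, pow_one]
        rw [if_pos (by tauto)]
      · have hc' : ¬ (i = ep1 a ∨ i = ep2 a) := by tauto
        simp only [if_neg hc, Finset.mem_insert, Finset.mem_singleton, pow_zero, if_neg hc']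
    simp only [this]
    rw [Finset.prod_ite_mem, Finset.univ_inter, Finset.prod_pair (hloop a)]

lemma prod_one_add {E : Type} [Fintype E] [DecidableEq E] (F : E → ℝ) :
    ∏ e : E, (1 + F e) = ∑ s : Finset E, ∏ e ∈ s, F e := by
  simp_rw [add_comm (1:ℝ)]
  rw [Fintype.prod_add]
  simp

lemma vertex_sum (ξ : ℝ) (hξ : 0 < ξ) (d : ℕ) :
    ((1:ℝ) * ξ⁻¹)^d * (ξ / (ξ + ξ⁻¹)) + ((-1:ℝ) * ξ)^d * (ξ⁻¹ / (ξ + ξ⁻¹))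
      = (-1)^d * chebF d (ξ - ξ⁻¹) := by
  have hne : ξ ≠ 0 := hξ.ne'
  have hc : ξ + ξ⁻¹ ≠ 0 := by positivity
  have cm := chebF_mul ξ hne d
  have hm : ((-1:ℝ))^d * (-1)^d = 1 := by
    rw [← pow_add]; exact Even.neg_one_pow ⟨d, rfl⟩
  have e1 : ∀ u v w : ℝ, u * (v / w) = u * v / w := fun _ _ _ => (mul_div_assoc _ _ _).symm
  rw [e1, e1, ← add_div, div_eq_iff hc]
  linear_combination (-((-1:ℝ)^d)) * cm - (ξ * (ξ⁻¹)^d) * hm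

theorem stmt_2 {V E : Type} [Fintype V] [DecidableEq V] [Fintype E] [DecidableEq E]
    (ep1 ep2 : E → V)
    -- the graph is simple: no loops and no multiple edges
    (hloop : ∀ e, ep1 e ≠ ep2 e)
    (hsimple : ∀ e e',
      (ep1 e = ep1 e' ∧ ep2 e = ep2 e') ∨ (ep1 e = ep2 e' ∧ ep2 e = ep1 e') → e = e')
    (ξ : V → ℝ) (hξ : ∀ i, 0 < ξ i) (β : E → ℝ) :
    ∑ x : V → Bool,
      (∏ e : E, (1 + (sgn (x (ep1 e)) : ℝ) * (sgn (x (ep2 e)) : ℝ) * β e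
          * ξ (ep1 e) ^ (-(sgn (x (ep1 e)))) * ξ (ep2 e) ^ (-(sgn (x (ep2 e)))))) *
        ∏ i : V, ξ i ^ (sgn (x i)) / (ξ i + (ξ i)⁻¹)
    = ∑ s : Finset E, (∏ e ∈ s, β e) * ∏ i : V, chebF (deg ep1 ep2 i s) (ξ i - (ξ i)⁻¹) := by
  have hne : ∀ i, ξ i ≠ 0 := fun i => (hξ i).ne'
  simp_rw [prod_one_add, Finset.sum_mul]
  rw [Finset.sum_comm]
  refine Finset.sum_congr rfl fun s _ => ?_
  -- rewrite each summand using `prod_deg`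
  have key : ∀ x : V → Bool,
      (∏ e ∈ s, ((sgn (x (ep1 e)) : ℝ) * (sgn (x (ep2 e)) : ℝ) * β e
          * ξ (ep1 e) ^ (-(sgn (x (ep1 e)))) * ξ (ep2 e) ^ (-(sgn (x (ep2 e)))))) *
        ∏ i : V, ξ i ^ (sgn (x i)) / (ξ i + (ξ i)⁻¹)
      = (∏ e ∈ s, β e) * ∏ i : V,
          (((sgn (x i) : ℝ) * ξ i ^ (-(sgn (x i))))^(deg ep1 ep2 i s)
            * (ξ i ^ (sgn (x i)) / (ξ i + (ξ i)⁻¹))) := by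
    intro x
    have h1 : (∏ e ∈ s, ((sgn (x (ep1 e)) : ℝ) * (sgn (x (ep2 e)) : ℝ) * β e
          * ξ (ep1 e) ^ (-(sgn (x (ep1 e)))) * ξ (ep2 e) ^ (-(sgn (x (ep2 e))))))
        = (∏ e ∈ s, β e) *
          ∏ e ∈ s, (((sgn (x (ep1 e)) : ℝ) * ξ (ep1 e) ^ (-(sgn (x (ep1 e)))))
            * ((sgn (x (ep2 e)) : ℝ) * ξ (ep2 e) ^ (-(sgn (x (ep2 e)))))) := by
      rw [← Finset.prod_mul_distrib]
      exact Finset.prod_congr rfl fun e _ => by ring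
    rw [h1, prod_deg ep1 ep2 hloop (fun i => (sgn (x i) : ℝ) * ξ i ^ (-(sgn (x i)))) s,
      mul_assoc, ← Finset.prod_mul_distrib]
  simp_rw [key]
  rw [← Finset.mul_sum]
  congr 1
  rw [show (∑ x : V → Bool, ∏ i : V,
        (((sgn (x i) : ℝ) * ξ i ^ (-(sgn (x i))))^(deg ep1 ep2 i s)
          * (ξ i ^ (sgn (x i)) / (ξ i + (ξ i)⁻¹))))
      = ∏ i : V, ∑ b : Bool,
        (((sgn b : ℝ) * ξ i ^ (-(sgn b)))^(deg ep1 ep2 i s)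
          * (ξ i ^ (sgn b) / (ξ i + (ξ i)⁻¹))) from (Fintype.prod_sum (κ := fun _ : V => Bool)
        (fun i b => (((sgn b : ℝ) * ξ i ^ (-(sgn b)))^(deg ep1 ep2 i s)
          * (ξ i ^ (sgn b) / (ξ i + (ξ i)⁻¹))))).symm]
  have hv : ∀ i : V, (∑ b : Bool,
        (((sgn b : ℝ) * ξ i ^ (-(sgn b)))^(deg ep1 ep2 i s)
          * (ξ i ^ (sgn b) / (ξ i + (ξ i)⁻¹))))
      = (-1:ℝ)^(deg ep1 ep2 i s) * chebF (deg ep1 ep2 i s) (ξ i - (ξ i)⁻¹) := by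
    intro i
    rw [Fintype.sum_bool]
    simp only [sgn, if_true, if_false, Int.cast_one, Int.cast_neg, zpow_one, zpow_neg,
      neg_neg, Bool.false_eq_true, ite_false, ite_true]
    exact vertex_sum (ξ i) (hξ i) (deg ep1 ep2 i s)
  calc (∏ i : V, ∑ b : Bool,
        (((sgn b : ℝ) * ξ i ^ (-(sgn b)))^(deg ep1 ep2 i s)
          * (ξ i ^ (sgn b) / (ξ i + (ξ i)⁻¹))))
      = ∏ i : V, ((-1:ℝ)^(deg ep1 ep2 i s) * chebF (deg ep1 ep2 i s) (ξ i - (ξ i)⁻¹)) :=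
        Finset.prod_congr rfl fun i _ => hv i
    _ = (∏ i : V, (-1:ℝ)^(deg ep1 ep2 i s))
        * ∏ i : V, chebF (deg ep1 ep2 i s) (ξ i - (ξ i)⁻¹) := Finset.prod_mul_distrib
    _ = ∏ i : V, chebF (deg ep1 ep2 i s) (ξ i - (ξ i)⁻¹) := by
        rw [← prod_deg ep1 ep2 hloop (fun _ => (-1:ℝ)) s]
        simp
end

section
/- At any LBP fixed point, Z / Z_B = Σ_{x : V → {±1}} ∏_{ij∈E} ( b_ij(x_i,x_j) / (b_i(x_i) b_j(x_j)) ) ∏_{i∈V} b_i(x_i). -/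
open Finset

lemma swap_prod {V E : Type} [Fintype V] [DecidableEq V] [Fintype E] [DecidableEq E]
    (ep1 ep2 : E → V) (hloop : ∀ e, ep1 e ≠ ep2 e) (g : E → V → ℝ) :
    ∏ i : V, ∏ e ∈ univ.filter (fun e => ep1 e = i ∨ ep2 e = i), g e i
      = ∏ e : E, g e (ep1 e) * g e (ep2 e) := by
  rw [Finset.prod_comm' (t' := (univ : Finset E))
    (s' := fun e => univ.filter (fun i => ep1 e = i ∨ ep2 e = i))
    (by intro i e; simp [mem_filter])]
  refine Finset.prod_congr rfl fun e _ => ?_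
  have : univ.filter (fun i => ep1 e = i ∨ ep2 e = i) = {ep1 e, ep2 e} := by
    ext i; simp [eq_comm, or_comm]
  rw [this, Finset.prod_pair (hloop e)]

lemma swap_sum {V E : Type} [Fintype V] [DecidableEq V] [Fintype E] [DecidableEq E]
    (ep1 ep2 : E → V) (hloop : ∀ e, ep1 e ≠ ep2 e) (g : E → V → ℝ) :
    ∑ i : V, ∑ e ∈ univ.filter (fun e => ep1 e = i ∨ ep2 e = i), g e i
      = ∑ e : E, (g e (ep1 e) + g e (ep2 e)) := by
  rw [Finset.sum_comm' (t' := (univ : Finset E))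
    (s' := fun e => univ.filter (fun i => ep1 e = i ∨ ep2 e = i))
    (by intro i e; simp [mem_filter])]
  refine Finset.sum_congr rfl fun e _ => ?_
  have : univ.filter (fun i => ep1 e = i ∨ ep2 e = i) = {ep1 e, ep2 e} := by
    ext i; simp [eq_comm, or_comm]
  rw [this, Finset.sum_pair (hloop e)]

theorem stmt_3 {V E : Type} [Fintype V] [DecidableEq V] [Fintype E] [DecidableEq E]
    -- a finite connected simple graph, with edge endpoints `ep1 e`, `ep2 e`
    (ep1 ep2 : E → V)
    (hloop : ∀ e, ep1 e ≠ ep2 e)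
    (hsimple : ∀ e e',
      (ep1 e = ep1 e' ∧ ep2 e = ep2 e') ∨ (ep1 e = ep2 e' ∧ ep2 e = ep1 e') → e = e')
    (hconn : (SimpleGraph.fromRel fun a b => ∃ e, ep1 e = a ∧ ep2 e = b).Connected)
    -- positive compatibility functions on the edges (spins: `true ↔ +1`, `false ↔ -1`)
    (ψ : E → Bool → Bool → ℝ) (hψ : ∀ e x1 x2, 0 < ψ e x1 x2)
    -- an LBP fixed point: positive messages `m e i`, the message toward the
    -- endpoint `i` along the edge `e`, rescaled by some positive `lam e i`
    (m : E → V → Bool → ℝ)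
    (hm1 : ∀ e x1, 0 < m e (ep1 e) x1) (hm2 : ∀ e x2, 0 < m e (ep2 e) x2)
    (lam : E → V → ℝ)
    (hlam1 : ∀ e, 0 < lam e (ep1 e)) (hlam2 : ∀ e, 0 < lam e (ep2 e))
    (hfix2 : ∀ e x2, lam e (ep2 e) * m e (ep2 e) x2 =
      ∑ x1 : Bool, ψ e x1 x2 *
        ∏ e' ∈ Finset.univ.filter fun e' =>
          (ep1 e' = ep1 e ∨ ep2 e' = ep1 e) ∧ e' ≠ e, m e' (ep1 e) x1)
    (hfix1 : ∀ e x1, lam e (ep1 e) * m e (ep1 e) x1 =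
      ∑ x2 : Bool, ψ e x1 x2 *
        ∏ e' ∈ Finset.univ.filter fun e' =>
          (ep1 e' = ep2 e ∨ ep2 e' = ep2 e) ∧ e' ≠ e, m e' (ep2 e) x2)
    -- beliefs with their positive normalization constants
    (c : V → ℝ) (cE : E → ℝ) (hc : ∀ i, 0 < c i) (hcE : ∀ e, 0 < cE e)
    (b : V → Bool → ℝ) (bE : E → Bool → Bool → ℝ)
    (hb : ∀ i x, b i x =
      (c i)⁻¹ * ∏ e ∈ Finset.univ.filter (fun e => ep1 e = i ∨ ep2 e = i), m e i x)
    (hbE : ∀ e x1 x2, bE e x1 x2 = (cE e)⁻¹ * ψ e x1 x2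
      * (∏ e' ∈ Finset.univ.filter fun e' =>
          (ep1 e' = ep1 e ∨ ep2 e' = ep1 e) ∧ e' ≠ e, m e' (ep1 e) x1)
      * ∏ e' ∈ Finset.univ.filter fun e' =>
          (ep1 e' = ep2 e ∨ ep2 e' = ep2 e) ∧ e' ≠ e, m e' (ep2 e) x2)
    (hbnorm : ∀ i, ∑ x : Bool, b i x = 1)
    (hbEnorm : ∀ e, ∑ x1 : Bool, ∑ x2 : Bool, bE e x1 x2 = 1)
    -- the partition function and the Bethe approximation of it
    (Z ZB : ℝ)
    (hZ : Z = ∑ x : V → Bool, ∏ e : E, ψ e (x (ep1 e)) (x (ep2 e)))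
    (hZB : 0 < ZB)
    (hlogZB : Real.log ZB =
      (∑ e : E, ∑ x1 : Bool, ∑ x2 : Bool, bE e x1 x2 * Real.log (ψ e x1 x2))
      - (∑ e : E, ∑ x1 : Bool, ∑ x2 : Bool, bE e x1 x2 * Real.log (bE e x1 x2))
      + ∑ i : V,
          (((Finset.univ.filter fun e => ep1 e = i ∨ ep2 e = i).card : ℝ) - 1) *
            ∑ x : Bool, b i x * Real.log (b i x)) :
    Z / ZB = ∑ x : V → Bool,
      (∏ e : E, bE e (x (ep1 e)) (x (ep2 e)) /
          (b (ep1 e) (x (ep1 e)) * b (ep2 e) (x (ep2 e)))) *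
        ∏ i : V, b i (x i) := by
  classical
  -- notation
  set N : V → Finset E := fun i => univ.filter (fun e => ep1 e = i ∨ ep2 e = i) with hN
  set P1 : E → Bool → ℝ := fun e a => ∏ e' ∈ univ.filter
      (fun e' => (ep1 e' = ep1 e ∨ ep2 e' = ep1 e) ∧ e' ≠ e), m e' (ep1 e) a with hP1def
  set P2 : E → Bool → ℝ := fun e a => ∏ e' ∈ univ.filter
      (fun e' => (ep1 e' = ep2 e ∨ ep2 e' = ep2 e) ∧ e' ≠ e), m e' (ep2 e) a with hP2def
  -- message positivity at each incident vertex
  have hmpos : ∀ (e' : E) (i : V), (ep1 e' = i ∨ ep2 e' = i) → ∀ a, 0 < m e' i a := by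
    rintro e' i (rfl | rfl) a
    · exact hm1 e' a
    · exact hm2 e' a
  have hP1pos : ∀ e a, 0 < P1 e a := by
    intro e a
    refine Finset.prod_pos fun e' he' => ?_
    rw [mem_filter] at he'
    exact hmpos e' (ep1 e) he'.2.1 a
  have hP2pos : ∀ e a, 0 < P2 e a := by
    intro e a
    refine Finset.prod_pos fun e' he' => ?_
    rw [mem_filter] at he'
    exact hmpos e' (ep2 e) he'.2.1 a
  have hbpos : ∀ i a, 0 < b i a := by
    intro i a
    rw [hb]
    refine mul_pos (inv_pos.2 (hc i)) (Finset.prod_pos fun e he => ?_)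
    rw [mem_filter] at he
    exact hmpos e i he.2 a
  have hbEpos : ∀ e a1 a2, 0 < bE e a1 a2 := by
    intro e a1 a2
    rw [hbE]
    exact mul_pos (mul_pos (mul_pos (inv_pos.2 (hcE e)) (hψ e a1 a2)) (hP1pos e a1))
      (hP2pos e a2)
  -- full product of messages at a vertex
  have hNb : ∀ i a, ∏ e ∈ N i, m e i a = c i * b i a := by
    intro i a
    rw [hb i a, ← mul_assoc, mul_inv_cancel₀ (hc i).ne', one_mul]
  have hmem1 : ∀ e, e ∈ N (ep1 e) := by intro e; simp [hN]
  have hmem2 : ∀ e, e ∈ N (ep2 e) := by intro e; simp [hN]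
  have hfilter1 : ∀ e : E, (univ.filter
      (fun e' => (ep1 e' = ep1 e ∨ ep2 e' = ep1 e) ∧ e' ≠ e)) = (N (ep1 e)).erase e := by
    intro e; ext e'; simp [hN, Finset.mem_erase, and_comm]
  have hfilter2 : ∀ e : E, (univ.filter
      (fun e' => (ep1 e' = ep2 e ∨ ep2 e' = ep2 e) ∧ e' ≠ e)) = (N (ep2 e)).erase e := by
    intro e; ext e'; simp [hN, Finset.mem_erase, and_comm]
  have hP1m : ∀ e a, P1 e a * m e (ep1 e) a = c (ep1 e) * b (ep1 e) a := by
    intro e a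
    rw [← hNb (ep1 e) a, hP1def]
    simp only
    rw [hfilter1 e]
    exact Finset.prod_erase_mul _ _ (hmem1 e)
  have hP2m : ∀ e a, P2 e a * m e (ep2 e) a = c (ep2 e) * b (ep2 e) a := by
    intro e a
    rw [← hNb (ep2 e) a, hP2def]
    simp only
    rw [hfilter2 e]
    exact Finset.prod_erase_mul _ _ (hmem2 e)
  -- the marginals of bE are b
  have hmargA : ∀ e a1, ∑ a2 : Bool, bE e a1 a2
      = ((cE e)⁻¹ * lam e (ep1 e) * c (ep1 e)) * b (ep1 e) a1 := by
    intro e a1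
    have : ∑ a2 : Bool, bE e a1 a2
        = (cE e)⁻¹ * P1 e a1 * ∑ a2 : Bool, ψ e a1 a2 * P2 e a2 := by
      rw [Finset.mul_sum]
      refine Finset.sum_congr rfl fun a2 _ => ?_
      rw [hbE]; ring
    rw [this, ← hfix1 e a1]; linear_combination ((cE e)⁻¹ * lam e (ep1 e)) * hP1m e a1
  have hk1 : ∀ e, (cE e)⁻¹ * lam e (ep1 e) * c (ep1 e) = 1 := by
    intro e
    have h := hbEnorm e
    have : ∑ a1 : Bool, ∑ a2 : Bool, bE e a1 a2
        = ((cE e)⁻¹ * lam e (ep1 e) * c (ep1 e)) * ∑ a1 : Bool, b (ep1 e) a1 := by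
      rw [Finset.mul_sum]
      exact Finset.sum_congr rfl fun a1 _ => hmargA e a1
    rw [this, hbnorm, mul_one] at h
    exact h
  have hmarg1 : ∀ e a1, ∑ a2 : Bool, bE e a1 a2 = b (ep1 e) a1 := by
    intro e a1; rw [hmargA, hk1, one_mul]
  have hmargB : ∀ e a2, ∑ a1 : Bool, bE e a1 a2
      = ((cE e)⁻¹ * lam e (ep2 e) * c (ep2 e)) * b (ep2 e) a2 := by
    intro e a2
    have : ∑ a1 : Bool, bE e a1 a2
        = (cE e)⁻¹ * P2 e a2 * ∑ a1 : Bool, ψ e a1 a2 * P1 e a1 := by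
      rw [Finset.mul_sum]
      refine Finset.sum_congr rfl fun a1 _ => ?_
      rw [hbE]; ring
    rw [this, ← hfix2 e a2]; linear_combination ((cE e)⁻¹ * lam e (ep2 e)) * hP2m e a2
  have hk2 : ∀ e, (cE e)⁻¹ * lam e (ep2 e) * c (ep2 e) = 1 := by
    intro e
    have h := hbEnorm e
    rw [Finset.sum_comm] at h
    have : ∑ a2 : Bool, ∑ a1 : Bool, bE e a1 a2
        = ((cE e)⁻¹ * lam e (ep2 e) * c (ep2 e)) * ∑ a2 : Bool, b (ep2 e) a2 := by
      rw [Finset.mul_sum]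
      exact Finset.sum_congr rfl fun a2 _ => hmargB e a2
    rw [this, hbnorm, mul_one] at h
    exact h
  have hmarg2 : ∀ e a2, ∑ a1 : Bool, bE e a1 a2 = b (ep2 e) a2 := by
    intro e a2; rw [hmargB, hk2, one_mul]
  -- logarithms of the partial message products
  have hlogP1 : ∀ e a, Real.log (P1 e a)
      = Real.log (c (ep1 e)) + Real.log (b (ep1 e) a) - Real.log (m e (ep1 e) a) := by
    intro e a
    have h : Real.log (P1 e a * m e (ep1 e) a) = Real.log (c (ep1 e) * b (ep1 e) a) := by
      rw [hP1m e a]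
    rw [Real.log_mul (hP1pos e a).ne' (hm1 e a).ne',
      Real.log_mul (hc _).ne' (hbpos _ a).ne'] at h
    linarith
  have hlogP2 : ∀ e a, Real.log (P2 e a)
      = Real.log (c (ep2 e)) + Real.log (b (ep2 e) a) - Real.log (m e (ep2 e) a) := by
    intro e a
    have h : Real.log (P2 e a * m e (ep2 e) a) = Real.log (c (ep2 e) * b (ep2 e) a) := by
      rw [hP2m e a]
    rw [Real.log_mul (hP2pos e a).ne' (hm2 e a).ne',
      Real.log_mul (hc _).ne' (hbpos _ a).ne'] at h
    linarith
  have hlogbE : ∀ e a1 a2, Real.log (bE e a1 a2)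
      = -Real.log (cE e) + Real.log (ψ e a1 a2) + Real.log (P1 e a1) + Real.log (P2 e a2) := by
    intro e a1 a2
    rw [hbE e a1 a2,
      Real.log_mul (mul_pos (mul_pos (inv_pos.2 (hcE e)) (hψ e a1 a2)) (hP1pos e a1)).ne'
        (hP2pos e a2).ne',
      Real.log_mul (mul_pos (inv_pos.2 (hcE e)) (hψ e a1 a2)).ne' (hP1pos e a1).ne',
      Real.log_mul (inv_pos.2 (hcE e)).ne' (hψ e a1 a2).ne', Real.log_inv]
  -- per-edge reduction of energy minus edge entropy
  have hstep : ∀ e, (∑ a1 : Bool, ∑ a2 : Bool, bE e a1 a2 * Real.log (ψ e a1 a2))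
      - (∑ a1 : Bool, ∑ a2 : Bool, bE e a1 a2 * Real.log (bE e a1 a2))
      = Real.log (cE e)
        - (∑ a1 : Bool, b (ep1 e) a1 * Real.log (P1 e a1))
        - (∑ a2 : Bool, b (ep2 e) a2 * Real.log (P2 e a2)) := by
    intro e
    have h1 : (∑ a1 : Bool, ∑ a2 : Bool, bE e a1 a2 * Real.log (ψ e a1 a2))
        - (∑ a1 : Bool, ∑ a2 : Bool, bE e a1 a2 * Real.log (bE e a1 a2))
        = ∑ a1 : Bool, ∑ a2 : Bool, (bE e a1 a2 * Real.log (cE e)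
            - bE e a1 a2 * Real.log (P1 e a1) - bE e a1 a2 * Real.log (P2 e a2)) := by
      rw [← Finset.sum_sub_distrib]
      refine Finset.sum_congr rfl fun a1 _ => ?_
      rw [← Finset.sum_sub_distrib]
      refine Finset.sum_congr rfl fun a2 _ => ?_
      rw [hlogbE e a1 a2]; ring
    rw [h1]
    have h2 : ∑ a1 : Bool, ∑ a2 : Bool, bE e a1 a2 * Real.log (cE e) = Real.log (cE e) := by
      simp only [← Finset.sum_mul]
      rw [hbEnorm e, one_mul]
    have h3 : ∀ a1, ∑ a2 : Bool, bE e a1 a2 * Real.log (P1 e a1)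
        = b (ep1 e) a1 * Real.log (P1 e a1) := by
      intro a1; rw [← Finset.sum_mul, hmarg1]
    have h4 : ∑ a1 : Bool, ∑ a2 : Bool, bE e a1 a2 * Real.log (P2 e a2)
        = ∑ a2 : Bool, b (ep2 e) a2 * Real.log (P2 e a2) := by
      rw [Finset.sum_comm]
      refine Finset.sum_congr rfl fun a2 _ => ?_
      rw [← Finset.sum_mul, hmarg2]
    simp only [Finset.sum_sub_distrib]
    rw [h2, h4]
    congr 1
    congr 1
    exact Finset.sum_congr rfl fun a1 _ => h3 a1
  -- reduce the P-entropy sums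
  have hstep1 : ∀ e, ∑ a1 : Bool, b (ep1 e) a1 * Real.log (P1 e a1)
      = Real.log (c (ep1 e)) + (∑ a : Bool, b (ep1 e) a * Real.log (b (ep1 e) a))
        - (∑ a : Bool, b (ep1 e) a * Real.log (m e (ep1 e) a)) := by
    intro e
    have h : ∀ a : Bool, b (ep1 e) a * Real.log (P1 e a)
        = b (ep1 e) a * Real.log (c (ep1 e)) + b (ep1 e) a * Real.log (b (ep1 e) a)
          - b (ep1 e) a * Real.log (m e (ep1 e) a) := by
      intro a; rw [hlogP1 e a]; ring
    simp only [h]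
    rw [Finset.sum_sub_distrib, Finset.sum_add_distrib, ← Finset.sum_mul, hbnorm, one_mul]
  have hstep2 : ∀ e, ∑ a2 : Bool, b (ep2 e) a2 * Real.log (P2 e a2)
      = Real.log (c (ep2 e)) + (∑ a : Bool, b (ep2 e) a * Real.log (b (ep2 e) a))
        - (∑ a : Bool, b (ep2 e) a * Real.log (m e (ep2 e) a)) := by
    intro e
    have h : ∀ a : Bool, b (ep2 e) a * Real.log (P2 e a)
        = b (ep2 e) a * Real.log (c (ep2 e)) + b (ep2 e) a * Real.log (b (ep2 e) a)
          - b (ep2 e) a * Real.log (m e (ep2 e) a) := by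
      intro a; rw [hlogP2 e a]; ring
    simp only [h]
    rw [Finset.sum_sub_distrib, Finset.sum_add_distrib, ← Finset.sum_mul, hbnorm, one_mul]
  -- the vertex-local "g" function and its swap sum
  have hg : ∑ i : V, ∑ e ∈ N i,
        (Real.log (c i) + (∑ a : Bool, b i a * Real.log (b i a))
          - (∑ a : Bool, b i a * Real.log (m e i a)))
      = ∑ e : E,
        ((Real.log (c (ep1 e)) + (∑ a : Bool, b (ep1 e) a * Real.log (b (ep1 e) a))
          - (∑ a : Bool, b (ep1 e) a * Real.log (m e (ep1 e) a)))
        + (Real.log (c (ep2 e)) + (∑ a : Bool, b (ep2 e) a * Real.log (b (ep2 e) a))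
          - (∑ a : Bool, b (ep2 e) a * Real.log (m e (ep2 e) a)))) :=
    swap_sum ep1 ep2 hloop _
  -- per-vertex evaluation of the inner sum
  have hvertex : ∀ i : V, ∑ e ∈ N i,
        (Real.log (c i) + (∑ a : Bool, b i a * Real.log (b i a))
          - (∑ a : Bool, b i a * Real.log (m e i a)))
      = (((N i).card : ℝ) - 1) *
          (Real.log (c i) + (∑ a : Bool, b i a * Real.log (b i a))) := by
    intro i
    have hT : ∑ e ∈ N i, ∑ a : Bool, b i a * Real.log (m e i a)
        = Real.log (c i) + ∑ a : Bool, b i a * Real.log (b i a) := by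
      rw [Finset.sum_comm]
      have : ∀ a : Bool, ∑ e ∈ N i, b i a * Real.log (m e i a)
          = b i a * (Real.log (c i) + Real.log (b i a)) := by
        intro a
        rw [← Finset.mul_sum]
        congr 1
        rw [← Real.log_prod (fun e he => (hmpos e i (by simpa [hN] using he) a).ne'),
          hNb i a, Real.log_mul (hc i).ne' (hbpos i a).ne']
      simp only [this, mul_add]
      rw [Finset.sum_add_distrib, ← Finset.sum_mul, hbnorm, one_mul]
    rw [Finset.sum_sub_distrib, hT, Finset.sum_const, nsmul_eq_mul]
    ring
  -- closed form of log ZB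
  have hlogZB' : Real.log ZB = (∑ e : E, Real.log (cE e))
      - ∑ i : V, (((N i).card : ℝ) - 1) * Real.log (c i) := by
    rw [hlogZB]
    have hA : (∑ e : E, ∑ x1 : Bool, ∑ x2 : Bool, bE e x1 x2 * Real.log (ψ e x1 x2))
        - (∑ e : E, ∑ x1 : Bool, ∑ x2 : Bool, bE e x1 x2 * Real.log (bE e x1 x2))
        = ∑ e : E, (Real.log (cE e)
            - (Real.log (c (ep1 e)) + (∑ a : Bool, b (ep1 e) a * Real.log (b (ep1 e) a))
              - (∑ a : Bool, b (ep1 e) a * Real.log (m e (ep1 e) a)))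
            - (Real.log (c (ep2 e)) + (∑ a : Bool, b (ep2 e) a * Real.log (b (ep2 e) a))
              - (∑ a : Bool, b (ep2 e) a * Real.log (m e (ep2 e) a)))) := by
      rw [← Finset.sum_sub_distrib]
      refine Finset.sum_congr rfl fun e _ => ?_
      rw [hstep e, hstep1 e, hstep2 e]
    rw [hA]
    have h5 : ∑ e : E, (Real.log (cE e)
            - (Real.log (c (ep1 e)) + (∑ a : Bool, b (ep1 e) a * Real.log (b (ep1 e) a))
              - (∑ a : Bool, b (ep1 e) a * Real.log (m e (ep1 e) a)))
            - (Real.log (c (ep2 e)) + (∑ a : Bool, b (ep2 e) a * Real.log (b (ep2 e) a))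
              - (∑ a : Bool, b (ep2 e) a * Real.log (m e (ep2 e) a))))
        = (∑ e : E, Real.log (cE e))
          - ∑ e : E,
            ((Real.log (c (ep1 e)) + (∑ a : Bool, b (ep1 e) a * Real.log (b (ep1 e) a))
              - (∑ a : Bool, b (ep1 e) a * Real.log (m e (ep1 e) a)))
            + (Real.log (c (ep2 e)) + (∑ a : Bool, b (ep2 e) a * Real.log (b (ep2 e) a))
              - (∑ a : Bool, b (ep2 e) a * Real.log (m e (ep2 e) a)))) := by
      rw [← Finset.sum_sub_distrib]
      exact Finset.sum_congr rfl fun e _ => by ring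
    have h6 : ∑ e : E,
            ((Real.log (c (ep1 e)) + (∑ a : Bool, b (ep1 e) a * Real.log (b (ep1 e) a))
              - (∑ a : Bool, b (ep1 e) a * Real.log (m e (ep1 e) a)))
            + (Real.log (c (ep2 e)) + (∑ a : Bool, b (ep2 e) a * Real.log (b (ep2 e) a))
              - (∑ a : Bool, b (ep2 e) a * Real.log (m e (ep2 e) a))))
        = ∑ i : V, (((N i).card : ℝ) - 1) *
            (Real.log (c i) + (∑ a : Bool, b i a * Real.log (b i a))) :=
      hg.symm.trans (Finset.sum_congr rfl fun i _ => hvertex i)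
    rw [h5, h6]
    have h7 : ∑ i : V, (((N i).card : ℝ) - 1) *
            (Real.log (c i) + (∑ a : Bool, b i a * Real.log (b i a)))
        = (∑ i : V, (((N i).card : ℝ) - 1) * Real.log (c i))
          + ∑ i : V, (((N i).card : ℝ) - 1) * (∑ a : Bool, b i a * Real.log (b i a)) := by
      rw [← Finset.sum_add_distrib]
      exact Finset.sum_congr rfl fun i _ => by ring
    rw [h7]
    ring
  -- the explicit constant W and the identification ZB = W
  have hprodcE : 0 < ∏ e : E, cE e := Finset.prod_pos fun e _ => hcE e
  have hprodc : 0 < ∏ i : V, c i := Finset.prod_pos fun i _ => hc i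
  have hprodcd : 0 < ∏ i : V, (c i) ^ (N i).card :=
    Finset.prod_pos fun i _ => pow_pos (hc i) _
  set W : ℝ := (∏ e : E, cE e) * ((∏ i : V, c i) / ∏ i : V, (c i) ^ (N i).card) with hW
  have hWpos : 0 < W := mul_pos hprodcE (div_pos hprodc hprodcd)
  have hlogW : Real.log W = (∑ e : E, Real.log (cE e))
      - ∑ i : V, (((N i).card : ℝ) - 1) * Real.log (c i) := by
    rw [hW, Real.log_mul hprodcE.ne' (div_pos hprodc hprodcd).ne',
      Real.log_div hprodc.ne' hprodcd.ne',
      Real.log_prod (fun e _ => (hcE e).ne'),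
      Real.log_prod (fun i _ => (hc i).ne'),
      Real.log_prod (fun i _ => (pow_pos (hc i) _).ne')]
    simp only [Real.log_pow]
    have h7 : ∑ i : V, (((N i).card : ℝ) - 1) * Real.log (c i)
        = (∑ i : V, ((N i).card : ℝ) * Real.log (c i)) - ∑ i : V, Real.log (c i) := by
      rw [← Finset.sum_sub_distrib]
      exact Finset.sum_congr rfl fun i _ => by ring
    rw [h7]
    push_cast
    ring
  have hZBW : ZB = W := by
    calc ZB = Real.exp (Real.log ZB) := (Real.exp_log hZB).symm
    _ = Real.exp (Real.log W) := by rw [hlogZB'.trans hlogW.symm]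
    _ = W := Real.exp_log hWpos
  -- pointwise ratio
  have hratio : ∀ (e : E) (a1 a2 : Bool),
      bE e a1 a2 / (b (ep1 e) a1 * b (ep2 e) a2)
        = (cE e)⁻¹ * ψ e a1 a2 * c (ep1 e) * c (ep2 e)
            / (m e (ep1 e) a1 * m e (ep2 e) a2) := by
    intro e a1 a2
    rw [hbE e a1 a2, div_eq_div_iff (mul_pos (hbpos _ a1) (hbpos _ a2)).ne'
      (mul_pos (hm1 e a1) (hm2 e a2)).ne']
    linear_combination ((cE e)⁻¹ * ψ e a1 a2 * (P2 e a2 * m e (ep2 e) a2)) * hP1m e a1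
      + ((cE e)⁻¹ * ψ e a1 a2 * (c (ep1 e) * b (ep1 e) a1)) * hP2m e a2
  -- pointwise evaluation of each configuration's summand
  have hsummand : ∀ x : V → Bool,
      (∏ e : E, bE e (x (ep1 e)) (x (ep2 e)) /
          (b (ep1 e) (x (ep1 e)) * b (ep2 e) (x (ep2 e)))) * ∏ i : V, b i (x i)
        = (∏ e : E, ψ e (x (ep1 e)) (x (ep2 e))) / W := by
    intro x
    have hbprod : ∏ i : V, b i (x i)
        = (∏ i : V, (c i)⁻¹) *
            ∏ e : E, (m e (ep1 e) (x (ep1 e)) * m e (ep2 e) (x (ep2 e))) := by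
      calc ∏ i : V, b i (x i)
          = ∏ i : V, ((c i)⁻¹ * ∏ e ∈ N i, m e i (x i)) :=
            Finset.prod_congr rfl fun i _ => hb i (x i)
        _ = (∏ i : V, (c i)⁻¹) * ∏ i : V, ∏ e ∈ N i, m e i (x i) :=
            Finset.prod_mul_distrib
        _ = _ := by rw [swap_prod ep1 ep2 hloop (fun e i => m e i (x i))]
    have hcd : (∏ e : E, c (ep1 e)) * (∏ e : E, c (ep2 e))
        = ∏ i : V, (c i) ^ (N i).card := by
      rw [← Finset.prod_mul_distrib, ← swap_prod ep1 ep2 hloop (fun e i => c i)]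
      exact Finset.prod_congr rfl fun i _ => Finset.prod_const _
    have h1 : (∏ e : E, bE e (x (ep1 e)) (x (ep2 e)) /
          (b (ep1 e) (x (ep1 e)) * b (ep2 e) (x (ep2 e))))
        = ∏ e : E, ((cE e)⁻¹ * ψ e (x (ep1 e)) (x (ep2 e)) * c (ep1 e) * c (ep2 e))
            / (m e (ep1 e) (x (ep1 e)) * m e (ep2 e) (x (ep2 e))) :=
      Finset.prod_congr rfl fun e _ => hratio e _ _
    rw [h1, Finset.prod_div_distrib, hbprod]
    simp only [Finset.prod_mul_distrib, Finset.prod_inv_distrib]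
    have hM : 0 < ∏ e : E, m e (ep1 e) (x (ep1 e)) :=
      Finset.prod_pos fun e _ => hm1 e _
    have hM2 : 0 < ∏ e : E, m e (ep2 e) (x (ep2 e)) :=
      Finset.prod_pos fun e _ => hm2 e _
    rw [hW, ← hcd]
    field_simp
  have hsum : ∑ x : V → Bool,
      (∏ e : E, bE e (x (ep1 e)) (x (ep2 e)) /
          (b (ep1 e) (x (ep1 e)) * b (ep2 e) (x (ep2 e)))) * ∏ i : V, b i (x i)
      = (∑ x : V → Bool, ∏ e : E, ψ e (x (ep1 e)) (x (ep2 e))) / W := by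
    calc ∑ x : V → Bool,
        (∏ e : E, bE e (x (ep1 e)) (x (ep2 e)) /
            (b (ep1 e) (x (ep1 e)) * b (ep2 e) (x (ep2 e)))) * ∏ i : V, b i (x i)
        = ∑ x : V → Bool, (∏ e : E, ψ e (x (ep1 e)) (x (ep2 e))) / W :=
          Finset.sum_congr rfl fun x _ => hsummand x
      _ = _ := by rw [Finset.sum_div]
  rw [hsum, hZBW, hZ]
end

section
/- With beliefs as in the context, Σ_{x : V → {±1}} ∏_{ij∈E} ( b_ij(x_i,x_j) / (b_i(x_i) b_j(x_j)) ) ∏_{i∈V} b_i(x_i) = Σ_{s ⊆ E} ∏_{ij∈s} β_ij ∏_{i∈V} f_{d_i(s)}(γ_i). (Combined with the identity Z/Z_B = Σ_x ∏_{ij} (b_ij/(b_i b_j)) ∏_i b_i, this is the loop series expansion Z = Z_B Σ_{s⊆E} r(s) with r(s) = ∏_{ij∈s} β_ij ∏_{i∈V} f_{d_i(s)}(γ_i).) -/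
lemma chebF_moment (p q : ℝ) (hp : 0 < p) (hq : 0 < q) (hpq : p + q = 1) (n : ℕ) :
    p * (-Real.sqrt (q / p)) ^ n + q * (Real.sqrt (p / q)) ^ n
      = chebF n ((p - q) / Real.sqrt (p * q)) := by
  obtain ⟨a, ha, rfl⟩ : ∃ a > 0, a ^ 2 = p := ⟨Real.sqrt p, Real.sqrt_pos.2 hp, Real.sq_sqrt hp.le⟩
  obtain ⟨c, hc, rfl⟩ : ∃ c > 0, c ^ 2 = q := ⟨Real.sqrt q, Real.sqrt_pos.2 hq, Real.sq_sqrt hq.le⟩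
  have hd : ∀ x y : ℝ, 0 < x → 0 < y → Real.sqrt (x ^ 2 / y ^ 2) = x / y := by
    intro x y hx hy
    rw [Real.sqrt_div' _ (by positivity), Real.sqrt_sq hx.le, Real.sqrt_sq hy.le]
  have hm : Real.sqrt (a ^ 2 * c ^ 2) = a * c := by
    rw [← mul_pow, Real.sqrt_sq (by positivity)]
  rw [hd c a hc ha, hd a c ha hc, hm]
  set γ : ℝ := (a ^ 2 - c ^ 2) / (a * c) with hγ
  have hsq1 : (-(c / a)) ^ 2 = γ * (-(c / a)) + 1 := by
    field_simp [hγ]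
    linear_combination (div_mul_cancel₀ _ (by positivity : a * c ≠ 0) : γ * (a * c) = a ^ 2 - c ^ 2)
  have hsq2 : (a / c) ^ 2 = γ * (a / c) + 1 := by
    field_simp [hγ]
    linear_combination (-1 : ℝ) * (div_mul_cancel₀ _ (by positivity : a * c ≠ 0) : γ * (a * c) = a ^ 2 - c ^ 2)
  induction n using Nat.twoStepInduction with
  | zero => simpa [chebF] using hpq
  | one =>
    simp only [pow_one, chebF]
    field_simp
    ring
  | more n ih1 ih2 =>
    have key : ∀ u : ℝ, u ^ 2 = γ * u + 1 → u ^ (n + 2) = γ * u ^ (n + 1) + u ^ n := by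
      intro u h
      calc u ^ (n + 2) = u ^ n * u ^ 2 := by ring
        _ = u ^ n * (γ * u + 1) := by rw [h]
        _ = γ * u ^ (n + 1) + u ^ n := by ring
    rw [key _ hsq1, key _ hsq2, show chebF (n + 2) γ = γ * chebF (n + 1) γ + chebF n γ from rfl,
      ← ih1, ← ih2]
    ring

theorem stmt_4 {V E : Type} [Fintype V] [DecidableEq V] [Fintype E] [DecidableEq E]
    -- a finite simple graph, with edge endpoints `ep1 e`, `ep2 e`
    (ep1 ep2 : E → V)
    (hloop : ∀ e, ep1 e ≠ ep2 e)
    (hsimple : ∀ e e',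
      (ep1 e = ep1 e' ∧ ep2 e = ep2 e') ∨ (ep1 e = ep2 e' ∧ ep2 e = ep1 e') → e = e')
    -- beliefs (spins: `true ↔ +1`, `false ↔ -1`)
    (b : V → Bool → ℝ) (hbpos : ∀ i x, 0 < b i x)
    (hbnorm : ∀ i, b i true + b i false = 1)
    (bE : E → Bool → Bool → ℝ)
    (hmarg1 : ∀ e x1, ∑ x2 : Bool, bE e x1 x2 = b (ep1 e) x1)
    (hmarg2 : ∀ e x2, ∑ x1 : Bool, bE e x1 x2 = b (ep2 e) x2)
    -- the quantities `γ_i` and `β_ij`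
    (γ : V → ℝ)
    (hγ : ∀ i, γ i = (b i true - b i false) / Real.sqrt (b i true * b i false))
    (β : E → ℝ)
    (hβ : ∀ e, β e =
      (bE e true true * bE e false false - bE e true false * bE e false true) /
        (Real.sqrt (b (ep1 e) true * b (ep1 e) false) *
          Real.sqrt (b (ep2 e) true * b (ep2 e) false))) :
    ∑ x : V → Bool,
      (∏ e : E, bE e (x (ep1 e)) (x (ep2 e)) /
          (b (ep1 e) (x (ep1 e)) * b (ep2 e) (x (ep2 e)))) *
        ∏ i : V, b i (x i)
    = ∑ s : Finset E, (∏ e ∈ s, β e) * ∏ i : V, chebF (deg ep1 ep2 i s) (γ i) := by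
  classical
  set u : V → Bool → ℝ := fun i x =>
    if x then -Real.sqrt (b i false / b i true) else Real.sqrt (b i true / b i false) with hu
  -- b i x * u i x = ± √(p q)
  have hbu : ∀ i (x : Bool), b i x * u i x =
      (if x then (-1 : ℝ) else 1) * Real.sqrt (b i true * b i false) := by
    intro i x
    have hp := hbpos i true
    have hq := hbpos i false
    obtain ⟨a, ha, hap⟩ : ∃ a > 0, a ^ 2 = b i true :=
      ⟨Real.sqrt _, Real.sqrt_pos.2 hp, Real.sq_sqrt hp.le⟩
    obtain ⟨c, hc, hcq⟩ : ∃ c > 0, c ^ 2 = b i false :=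
      ⟨Real.sqrt _, Real.sqrt_pos.2 hq, Real.sq_sqrt hq.le⟩
    have hd : ∀ x y : ℝ, 0 < x → 0 < y → Real.sqrt (x ^ 2 / y ^ 2) = x / y := by
      intro x y hx hy
      rw [Real.sqrt_div' _ (by positivity), Real.sqrt_sq hx.le, Real.sqrt_sq hy.le]
    have hm : Real.sqrt (b i true * b i false) = a * c := by
      rw [← hap, ← hcq, ← mul_pow, Real.sqrt_sq (by positivity)]
    cases x <;>
      simp only [hu, if_true, if_false, Bool.false_eq_true, ← hap, ← hcq, hm, hd c a hc ha,
        hd a c ha hc] <;>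
      field_simp <;> rw [← mul_pow, Real.sqrt_sq (by positivity)]
  -- the key edge identity
  have key : ∀ e (x y : Bool), bE e x y =
      b (ep1 e) x * b (ep2 e) y + β e * ((b (ep1 e) x * u (ep1 e) x) * (b (ep2 e) y * u (ep2 e) y)) := by
    intro e x y
    have S1pos : (0:ℝ) < Real.sqrt (b (ep1 e) true * b (ep1 e) false) :=
      Real.sqrt_pos.2 (mul_pos (hbpos _ _) (hbpos _ _))
    have S2pos : (0:ℝ) < Real.sqrt (b (ep2 e) true * b (ep2 e) false) :=
      Real.sqrt_pos.2 (mul_pos (hbpos _ _) (hbpos _ _))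
    have hD : β e * (Real.sqrt (b (ep1 e) true * b (ep1 e) false) *
        Real.sqrt (b (ep2 e) true * b (ep2 e) false)) =
        bE e true true * bE e false false - bE e true false * bE e false true := by
      rw [hβ e]; field_simp
    have m1 := hmarg1 e true
    have m2 := hmarg1 e false
    have m3 := hmarg2 e true
    simp only [Fintype.sum_bool] at m1 m2 m3
    have hdet : bE e true true * bE e false false - bE e true false * bE e false true =
        bE e true true - b (ep1 e) true * b (ep2 e) true := by
      have h1 := hbnorm (ep1 e)
      have e10 : bE e true false = b (ep1 e) true - bE e true true := by linarith
      have e01 : bE e false true = b (ep2 e) true - bE e true true := by linarith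
      have e00 : bE e false false =
          b (ep1 e) false - (b (ep2 e) true - bE e true true) := by linarith
      rw [e10, e01, e00]
      linear_combination (bE e true true) * h1
    rw [hdet] at hD
    have hb1 := hbnorm (ep1 e)
    have hb2 := hbnorm (ep2 e)
    cases x <;> cases y <;>
        rw [hbu, hbu] <;>
        simp only [if_true, if_false, Bool.false_eq_true]
    · linear_combination m2 - m3 - hD + b (ep2 e) true * hbnorm (ep1 e) -
        b (ep1 e) false * hbnorm (ep2 e)
    · linear_combination m3 + hD - b (ep2 e) true * hbnorm (ep1 e)
    · linear_combination m1 + hD - b (ep1 e) true * hbnorm (ep2 e)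
    · linear_combination -hD
  -- division form of the edge identity
  have hdiv : ∀ e (x : V → Bool),
      bE e (x (ep1 e)) (x (ep2 e)) / (b (ep1 e) (x (ep1 e)) * b (ep2 e) (x (ep2 e)))
        = 1 + β e * (u (ep1 e) (x (ep1 e)) * u (ep2 e) (x (ep2 e))) := by
    intro e x
    have h1 := (hbpos (ep1 e) (x (ep1 e))).ne'
    have h2 := (hbpos (ep2 e) (x (ep2 e))).ne'
    rw [key]
    field_simp
  -- counting incidences
  have hcount : ∀ (s : Finset E) (i : V),
      (∑ e ∈ s, ((if ep1 e = i then 1 else 0) + (if ep2 e = i then (1:ℕ) else 0)))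
        = deg ep1 ep2 i s := by
    intro s i
    rw [deg, Finset.card_filter]
    refine Finset.sum_congr rfl fun e _ => ?_
    by_cases h1 : ep1 e = i <;> by_cases h2 : ep2 e = i <;> simp [h1, h2]
    exact (hloop e (h1.trans h2.symm)).elim
  -- regrouping the product over edges as a product over vertices
  have hre : ∀ (s : Finset E) (x : V → Bool),
      (∏ e ∈ s, (u (ep1 e) (x (ep1 e)) * u (ep2 e) (x (ep2 e))))
        = ∏ i : V, (u i (x i)) ^ (deg ep1 ep2 i s) := by
    intro s x
    have h1 : ∀ e ∈ s, u (ep1 e) (x (ep1 e)) * u (ep2 e) (x (ep2 e)) =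
        ∏ i : V, (u i (x i)) ^
          ((if ep1 e = i then 1 else 0) + (if ep2 e = i then (1:ℕ) else 0)) := by
      intro e _
      simp_rw [pow_add, pow_ite, pow_one, pow_zero, Finset.prod_mul_distrib,
        Finset.prod_ite_eq, Finset.mem_univ, if_true]
    rw [Finset.prod_congr rfl h1, Finset.prod_comm]
    refine Finset.prod_congr rfl fun i _ => ?_
    rw [Finset.prod_pow_eq_pow_sum, hcount]
  -- single-vertex moments
  have hmom : ∀ (i : V) (n : ℕ),
      (∑ y : Bool, b i y * (u i y) ^ n) = chebF n (γ i) := by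
    intro i n
    rw [Fintype.sum_bool, hγ i]
    simpa [hu] using chebF_moment (b i true) (b i false) (hbpos i true) (hbpos i false)
      (hbnorm i) n
  calc
    ∑ x : V → Bool,
        (∏ e : E, bE e (x (ep1 e)) (x (ep2 e)) /
            (b (ep1 e) (x (ep1 e)) * b (ep2 e) (x (ep2 e)))) * ∏ i : V, b i (x i)
      = ∑ x : V → Bool,
          (∑ s : Finset E, ∏ e ∈ s, β e * (u (ep1 e) (x (ep1 e)) * u (ep2 e) (x (ep2 e)))) *
            ∏ i : V, b i (x i) := by
        refine Finset.sum_congr rfl fun x _ => ?_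
        congr 1
        calc (∏ e : E, bE e (x (ep1 e)) (x (ep2 e)) /
                (b (ep1 e) (x (ep1 e)) * b (ep2 e) (x (ep2 e))))
            = ∏ e : E, (β e * (u (ep1 e) (x (ep1 e)) * u (ep2 e) (x (ep2 e))) + 1) := by
              refine Finset.prod_congr rfl fun e _ => ?_
              rw [hdiv e x, add_comm]
          _ = ∑ s : Finset E, ∏ e ∈ s, β e * (u (ep1 e) (x (ep1 e)) * u (ep2 e) (x (ep2 e))) := by
              rw [Fintype.prod_add]
              simp
    _ = ∑ s : Finset E, (∏ e ∈ s, β e) *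
          ∑ x : V → Bool, ∏ i : V, (b i (x i) * (u i (x i)) ^ (deg ep1 ep2 i s)) := by
        simp_rw [Finset.sum_mul]
        rw [Finset.sum_comm]
        refine Finset.sum_congr rfl fun s _ => ?_
        rw [Finset.mul_sum]
        refine Finset.sum_congr rfl fun x _ => ?_
        rw [Finset.prod_mul_distrib, hre s x, Finset.prod_mul_distrib]
        ring
    _ = ∑ s : Finset E, (∏ e ∈ s, β e) * ∏ i : V, chebF (deg ep1 ep2 i s) (γ i) := by
        refine Finset.sum_congr rfl fun s _ => ?_
        congr 1
        rw [← Fintype.prod_sum fun i y => b i y * (u i y) ^ (deg ep1 ep2 i s)]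
        exact Finset.prod_congr rfl fun i _ => hmom i _
end

section
/- Fix a distinguished node 1 ∈ V, let {ξ_i}_{i∈V} be positive reals and {β_ij}_{ij∈E} arbitrary reals. Then Σ_{x : V → {±1}} x_1 ∏_{ij∈E} (1 + x_i x_j β_ij ξ_i^{−x_i} ξ_j^{−x_j}) ∏_{i∈V} ξ_i^{x_i}/(ξ_i + ξ_i⁻¹) = Σ_{s ⊆ E} ∏_{ij∈s} β_ij ∏_{i∈V∖{1}} f_{d_i(s)}(ξ_i − ξ_i⁻¹) · g_{d_1(s)}(ξ_1 − ξ_1⁻¹)/(ξ_1 + ξ_1⁻¹). -/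
/-- The polynomials `g_n` defined by `g_0(x) = x`, `g_1(x) = -2`,
`g_{n+1}(x) = x g_n(x) + g_{n-1}(x)`. -/
def chebG : ℕ → ℝ → ℝ
  | 0, x => x
  | 1, _ => -2
  | n + 2, x => x * chebG (n + 1) x + chebG n x

set_option linter.unusedSectionVars false in
lemma chebF_closed (ξ : ℝ) (hξ : 0 < ξ) (n : ℕ) :
    chebF n (ξ - ξ⁻¹) * (ξ + ξ⁻¹) = ξ ^ (n : ℤ) * ξ⁻¹ + (-1) ^ n * (ξ ^ (n : ℤ))⁻¹ * ξ := by
  have hne : ξ ≠ 0 := hξ.ne'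
  induction n using Nat.twoStepInduction with
  | zero => simp [chebF]; ring
  | one => simp [chebF]; field_simp; norm_num
  | more n ih1 ih2 =>
    have ht : ξ ^ (n : ℤ) ≠ 0 := zpow_ne_zero _ hne
    have e1 : ξ ^ ((n + 1 : ℕ) : ℤ) = ξ ^ (n : ℤ) * ξ := by
      push_cast; rw [zpow_add₀ hne, zpow_one]
    have e2 : ξ ^ ((n + 2 : ℕ) : ℤ) = ξ ^ (n : ℤ) * ξ * ξ := by
      push_cast
      rw [show (n:ℤ)+2 = (n:ℤ)+1+1 by ring, zpow_add₀ hne, zpow_add₀ hne, zpow_one]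
    show ((ξ - ξ⁻¹) * chebF (n+1) (ξ - ξ⁻¹) + chebF n (ξ - ξ⁻¹)) * (ξ + ξ⁻¹) = _
    have : ((ξ - ξ⁻¹) * chebF (n+1) (ξ - ξ⁻¹) + chebF n (ξ - ξ⁻¹)) * (ξ + ξ⁻¹)
        = (ξ - ξ⁻¹) * (chebF (n+1) (ξ - ξ⁻¹) * (ξ + ξ⁻¹)) + chebF n (ξ - ξ⁻¹) * (ξ + ξ⁻¹) := by
      ring
    rw [this, ih2, ih1, e1, e2]
    field_simp
    ring

lemma chebG_closed (ξ : ℝ) (hξ : 0 < ξ) (n : ℕ) :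
    chebG n (ξ - ξ⁻¹) = (-1) ^ n * (ξ ^ (n : ℤ))⁻¹ * ξ - ξ ^ (n : ℤ) * ξ⁻¹ := by
  have hne : ξ ≠ 0 := hξ.ne'
  induction n using Nat.twoStepInduction with
  | zero => simp [chebG]
  | one => simp [chebG]; field_simp; ring
  | more n ih1 ih2 =>
    have ht : ξ ^ (n : ℤ) ≠ 0 := zpow_ne_zero _ hne
    have e1 : ξ ^ ((n + 1 : ℕ) : ℤ) = ξ ^ (n : ℤ) * ξ := by
      push_cast; rw [zpow_add₀ hne, zpow_one]
    have e2 : ξ ^ ((n + 2 : ℕ) : ℤ) = ξ ^ (n : ℤ) * ξ * ξ := by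
      push_cast
      rw [show (n:ℤ)+2 = (n:ℤ)+1+1 by ring, zpow_add₀ hne, zpow_add₀ hne, zpow_one]
    show (ξ - ξ⁻¹) * chebG (n+1) (ξ - ξ⁻¹) + chebG n (ξ - ξ⁻¹) = _
    rw [ih2, ih1, e1, e2]
    field_simp
    ring

lemma vertexF (ξ : ℝ) (hξ : 0 < ξ) (d : ℕ) :
    ∑ b : Bool, ((sgn b : ℝ) * ξ ^ (-(sgn b))) ^ d * (ξ ^ (sgn b) / (ξ + ξ⁻¹))
      = (-1) ^ d * chebF d (ξ - ξ⁻¹) := by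
  have hne : ξ ≠ 0 := hξ.ne'
  have hc : ξ + ξ⁻¹ ≠ 0 := by positivity
  have ht : ξ ^ (d : ℤ) ≠ 0 := zpow_ne_zero _ hne
  have key := chebF_closed ξ hξ d
  rw [Fintype.sum_bool]
  have st : sgn true = 1 := rfl
  have sf : sgn false = -1 := rfl
  rw [st, sf]
  simp only [Int.cast_one, Int.cast_neg, zpow_one, zpow_neg, neg_neg]
  have h1 : ((1 : ℝ) * ξ⁻¹) ^ d = (ξ ^ (d : ℤ))⁻¹ := by
    rw [one_mul, ← inv_zpow, zpow_natCast]
  have h2 : ((-1 : ℝ) * ξ) ^ d = (-1) ^ d * ξ ^ (d : ℤ) := by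
    rw [mul_pow, zpow_natCast]
  have hs : (-1:ℝ)^d * (-1)^d = 1 := by
    rw [← pow_add]; exact Even.neg_one_pow ⟨d, rfl⟩
  rw [h1, h2, ← mul_div_assoc, ← mul_div_assoc, ← add_div, div_eq_iff hc]
  linear_combination (-((-1:ℝ))^d) * key - (ξ ^ (d:ℤ))⁻¹ * ξ * hs

lemma vertexG (ξ : ℝ) (hξ : 0 < ξ) (d : ℕ) :
    ∑ b : Bool, (sgn b : ℝ) * (((sgn b : ℝ) * ξ ^ (-(sgn b))) ^ d * (ξ ^ (sgn b) / (ξ + ξ⁻¹)))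
      = (-1) ^ d * (chebG d (ξ - ξ⁻¹) / (ξ + ξ⁻¹)) := by
  have hne : ξ ≠ 0 := hξ.ne'
  have hc : ξ + ξ⁻¹ ≠ 0 := by positivity
  have ht : ξ ^ (d : ℤ) ≠ 0 := zpow_ne_zero _ hne
  have key := chebG_closed ξ hξ d
  rw [Fintype.sum_bool]
  have st : sgn true = 1 := rfl
  have sf : sgn false = -1 := rfl
  rw [st, sf]
  simp only [Int.cast_one, Int.cast_neg, zpow_one, zpow_neg, neg_neg]
  have h1 : ((1 : ℝ) * ξ⁻¹) ^ d = (ξ ^ (d : ℤ))⁻¹ := by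
    rw [one_mul, ← inv_zpow, zpow_natCast]
  have h2 : ((-1 : ℝ) * ξ) ^ d = (-1) ^ d * ξ ^ (d : ℤ) := by
    rw [mul_pow, zpow_natCast]
  have hs : (-1:ℝ)^d * (-1)^d = 1 := by
    rw [← pow_add]; exact Even.neg_one_pow ⟨d, rfl⟩
  rw [h1, h2, key]
  field_simp
  ring_nf
  simp [pow_mul', neg_one_sq]

section main
variable {V E : Type} [Fintype V] [DecidableEq V] [Fintype E] [DecidableEq E]

lemma deg_split (ep1 ep2 : E → V) (hloop : ∀ e, ep1 e ≠ ep2 e) (i : V) (s : Finset E) :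
    deg ep1 ep2 i s
      = (s.filter fun e => ep1 e = i).card + (s.filter fun e => ep2 e = i).card := by
  rw [deg, Finset.filter_or, Finset.card_union_of_disjoint]
  rw [Finset.disjoint_left]
  intro e h1 h2
  exact hloop e ((Finset.mem_filter.mp h1).2.trans (Finset.mem_filter.mp h2).2.symm)

lemma sum_deg (ep1 ep2 : E → V) (hloop : ∀ e, ep1 e ≠ ep2 e) (s : Finset E) :
    ∑ i : V, deg ep1 ep2 i s = 2 * s.card := by
  simp_rw [deg_split ep1 ep2 hloop, Finset.sum_add_distrib]
  rw [← Finset.card_eq_sum_card_fiberwise (fun e (_ : e ∈ s) => Finset.mem_univ (ep1 e)),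
      ← Finset.card_eq_sum_card_fiberwise (fun e (_ : e ∈ s) => Finset.mem_univ (ep2 e))]
  ring

lemma prod_comp_card (h : V → ℝ) (ep : E → V) (s : Finset E) :
    ∏ e ∈ s, h (ep e) = ∏ i : V, h i ^ (s.filter fun e => ep e = i).card := by
  rw [← Finset.prod_fiberwise_of_maps_to (fun e (_ : e ∈ s) => Finset.mem_univ (ep e))
      (fun e => h (ep e))]
  refine Finset.prod_congr rfl fun i _ => ?_
  rw [← Finset.prod_const]
  exact Finset.prod_congr rfl fun e he => by rw [(Finset.mem_filter.mp he).2]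

set_option linter.unusedVariables false in
theorem stmt_5' (ep1 ep2 : E → V)
    (hloop : ∀ e, ep1 e ≠ ep2 e)
    (hsimple : ∀ e e',
      (ep1 e = ep1 e' ∧ ep2 e = ep2 e') ∨ (ep1 e = ep2 e' ∧ ep2 e = ep1 e') → e = e')
    (v1 : V)
    (ξ : V → ℝ) (hξ : ∀ i, 0 < ξ i) (β : E → ℝ) :
    ∑ x : V → Bool, (sgn (x v1) : ℝ) *
      (∏ e : E, (1 + (sgn (x (ep1 e)) : ℝ) * (sgn (x (ep2 e)) : ℝ) * β e
          * ξ (ep1 e) ^ (-(sgn (x (ep1 e)))) * ξ (ep2 e) ^ (-(sgn (x (ep2 e)))))) *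
        ∏ i : V, ξ i ^ (sgn (x i)) / (ξ i + (ξ i)⁻¹)
    = ∑ s : Finset E, (∏ e ∈ s, β e) *
        (∏ i ∈ Finset.univ.erase v1, chebF (deg ep1 ep2 i s) (ξ i - (ξ i)⁻¹)) *
        (chebG (deg ep1 ep2 v1 s) (ξ v1 - (ξ v1)⁻¹) / (ξ v1 + (ξ v1)⁻¹)) := by
  classical
  set h : (V → Bool) → V → ℝ :=
    fun x j => (sgn (x j) : ℝ) * ξ j ^ (-(sgn (x j))) with hh
  set F : Finset E → V → Bool → ℝ :=
    fun s i b => (if i = v1 then (sgn b : ℝ) else 1) *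
      (((sgn b : ℝ) * ξ i ^ (-(sgn b))) ^ (deg ep1 ep2 i s)
        * (ξ i ^ (sgn b) / (ξ i + (ξ i)⁻¹))) with hF
  -- Step A : pointwise expansion
  have stepA : ∀ x : V → Bool,
      (sgn (x v1) : ℝ) *
      (∏ e : E, (1 + (sgn (x (ep1 e)) : ℝ) * (sgn (x (ep2 e)) : ℝ) * β e
          * ξ (ep1 e) ^ (-(sgn (x (ep1 e)))) * ξ (ep2 e) ^ (-(sgn (x (ep2 e)))))) *
        ∏ i : V, ξ i ^ (sgn (x i)) / (ξ i + (ξ i)⁻¹)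
      = ∑ s : Finset E, (∏ e ∈ s, β e) * ∏ i : V, F s i (x i) := by
    intro x
    have hexp : (∏ e : E, (1 + (sgn (x (ep1 e)) : ℝ) * (sgn (x (ep2 e)) : ℝ) * β e
          * ξ (ep1 e) ^ (-(sgn (x (ep1 e)))) * ξ (ep2 e) ^ (-(sgn (x (ep2 e))))))
        = ∑ s : Finset E, ∏ e ∈ s, (sgn (x (ep1 e)) : ℝ) * (sgn (x (ep2 e)) : ℝ) * β e
          * ξ (ep1 e) ^ (-(sgn (x (ep1 e)))) * ξ (ep2 e) ^ (-(sgn (x (ep2 e)))) := by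
      simp_rw [add_comm (1 : ℝ)]
      rw [Finset.prod_add, Finset.powerset_univ]
      simp
    rw [hexp, Finset.mul_sum, Finset.sum_mul]
    refine Finset.sum_congr rfl fun s _ => ?_
    have h1 : (∏ e ∈ s, (sgn (x (ep1 e)) : ℝ) * (sgn (x (ep2 e)) : ℝ) * β e
          * ξ (ep1 e) ^ (-(sgn (x (ep1 e)))) * ξ (ep2 e) ^ (-(sgn (x (ep2 e)))))
        = (∏ e ∈ s, β e) * ((∏ e ∈ s, h x (ep1 e)) * (∏ e ∈ s, h x (ep2 e))) := by
      rw [← Finset.prod_mul_distrib, ← Finset.prod_mul_distrib]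
      exact Finset.prod_congr rfl fun e _ => by simp only [hh]; ring
    have h2 : (∏ e ∈ s, h x (ep1 e)) * (∏ e ∈ s, h x (ep2 e))
        = ∏ i : V, h x i ^ (deg ep1 ep2 i s) := by
      rw [prod_comp_card (h x) ep1 s, prod_comp_card (h x) ep2 s,
        ← Finset.prod_mul_distrib]
      exact Finset.prod_congr rfl fun i _ => by
        rw [← pow_add, ← deg_split ep1 ep2 hloop]
    have h3 : (sgn (x v1) : ℝ) = ∏ i : V, (if i = v1 then (sgn (x i) : ℝ) else 1) := by
      rw [Finset.prod_ite_eq' Finset.univ v1 (fun i => (sgn (x i) : ℝ))]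
      simp
    rw [h1, h2, h3]
    simp only [hF, hh]
    conv_rhs => rw [Finset.prod_mul_distrib, Finset.prod_mul_distrib]
    ring
  refine Eq.trans (Finset.sum_congr rfl fun x _ => stepA x) ?_
  rw [Finset.sum_comm]
  refine Finset.sum_congr rfl fun s _ => ?_
  rw [← Finset.mul_sum]
  have hswap : ∑ x : V → Bool, ∏ i, F s i (x i) = ∏ i : V, ∑ b : Bool, F s i b := by
    rw [← Fintype.piFinset_univ, Finset.sum_prod_piFinset]
  rw [hswap]
  have hv1 : ∑ b : Bool, F s v1 b = (-1) ^ (deg ep1 ep2 v1 s) *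
      (chebG (deg ep1 ep2 v1 s) (ξ v1 - (ξ v1)⁻¹) / (ξ v1 + (ξ v1)⁻¹)) := by
    simp only [hF, if_pos rfl]
    exact vertexG (ξ v1) (hξ v1) _
  have hnv : ∀ i ∈ Finset.univ.erase v1, (∑ b : Bool, F s i b)
      = (-1) ^ (deg ep1 ep2 i s) * chebF (deg ep1 ep2 i s) (ξ i - (ξ i)⁻¹) := by
    intro i hi
    have hi' : i ≠ v1 := (Finset.mem_erase.mp hi).1
    simp only [hF, if_neg hi', one_mul]
    exact vertexF (ξ i) (hξ i) _
  rw [← Finset.mul_prod_erase Finset.univ _ (Finset.mem_univ v1), hv1,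
      Finset.prod_congr rfl hnv, Finset.prod_mul_distrib]
  have hsign : (-1:ℝ) ^ (deg ep1 ep2 v1 s) *
      ∏ i ∈ Finset.univ.erase v1, (-1:ℝ) ^ (deg ep1 ep2 i s) = 1 := by
    rw [Finset.mul_prod_erase Finset.univ (fun i => (-1:ℝ) ^ (deg ep1 ep2 i s))
        (Finset.mem_univ v1), Finset.prod_pow_eq_pow_sum, sum_deg ep1 ep2 hloop s, pow_mul]
    norm_num
  linear_combination (∏ e ∈ s, β e) *
    (∏ i ∈ Finset.univ.erase v1, chebF (deg ep1 ep2 i s) (ξ i - (ξ i)⁻¹)) *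
    (chebG (deg ep1 ep2 v1 s) (ξ v1 - (ξ v1)⁻¹) / (ξ v1 + (ξ v1)⁻¹)) * hsign

end main

theorem stmt_5 {V E : Type} [Fintype V] [DecidableEq V] [Fintype E] [DecidableEq E]
    (ep1 ep2 : E → V)
    (hloop : ∀ e, ep1 e ≠ ep2 e)
    (hsimple : ∀ e e',
      (ep1 e = ep1 e' ∧ ep2 e = ep2 e') ∨ (ep1 e = ep2 e' ∧ ep2 e = ep1 e') → e = e')
    -- the distinguished node `1 ∈ V`
    (v1 : V)
    (ξ : V → ℝ) (hξ : ∀ i, 0 < ξ i) (β : E → ℝ) :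
    ∑ x : V → Bool, (sgn (x v1) : ℝ) *
      (∏ e : E, (1 + (sgn (x (ep1 e)) : ℝ) * (sgn (x (ep2 e)) : ℝ) * β e
          * ξ (ep1 e) ^ (-(sgn (x (ep1 e)))) * ξ (ep2 e) ^ (-(sgn (x (ep2 e)))))) *
        ∏ i : V, ξ i ^ (sgn (x i)) / (ξ i + (ξ i)⁻¹)
    = ∑ s : Finset E, (∏ e ∈ s, β e) *
        (∏ i ∈ Finset.univ.erase v1, chebF (deg ep1 ep2 i s) (ξ i - (ξ i)⁻¹)) *
        (chebG (deg ep1 ep2 v1 s) (ξ v1 - (ξ v1)⁻¹) / (ξ v1 + (ξ v1)⁻¹)) := by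
  exact stmt_5' ep1 ep2 hloop hsimple v1 ξ hξ β
end

section
/- Let G = (V,E) be a finite connected simple graph. Then for every real ξ > 0, θ_G(1,ξ) = (1 + ξ^{−2})^{|E|} ( ξ/(ξ + ξ⁻¹) )^{|V|} + (1 + ξ^{2})^{|E|} ( ξ⁻¹/(ξ + ξ⁻¹) )^{|V|}. -/
/-- The graph polynomial `θ_G(β,ξ) = Σ_{s ⊆ E} β^{|s|} Π_{i∈V} f_{d_i(s)}(ξ - ξ⁻¹)`. -/
noncomputable def theta {V E : Type} [Fintype V] [DecidableEq V] [Fintype E] [DecidableEq E]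
    (ep1 ep2 : E → V) (β ξ : ℝ) : ℝ :=
  ∑ s : Finset E, β ^ s.card * ∏ i : V, chebF (deg ep1 ep2 i s) (ξ - ξ⁻¹)

/-- spin value -/
noncomputable def tval (ξ : ℝ) : Bool → ℝ := fun b => if b then ξ else -ξ⁻¹

/-- spin coefficient -/
noncomputable def cval (ξ : ℝ) : Bool → ℝ :=
  fun b => if b then ξ⁻¹ / (ξ + ξ⁻¹) else ξ / (ξ + ξ⁻¹)

lemma chebF_step (x t : ℝ) (h : t ^ 2 = x * t + 1) (n : ℕ) :
    t ^ (n + 2) = x * t ^ (n + 1) + t ^ n := by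
  have h2 : t ^ (n + 2) = t ^ n * t ^ 2 := by ring
  rw [h2, h]; ring

lemma chebF_eq (ξ : ℝ) (hξ : 0 < ξ) (n : ℕ) :
    chebF n (ξ - ξ⁻¹) = ∑ b : Bool, cval ξ b * tval ξ b ^ n := by
  have hξ0 : ξ ≠ 0 := ne_of_gt hξ
  have hden : ξ + ξ⁻¹ ≠ 0 := by positivity
  have httrue : tval ξ true ^ 2 = (ξ - ξ⁻¹) * tval ξ true + 1 := by
    simp only [tval, if_true]; field_simp; ring
  have htfalse : tval ξ false ^ 2 = (ξ - ξ⁻¹) * tval ξ false + 1 := by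
    simp only [tval, if_false, Bool.false_eq_true]; field_simp; ring
  induction n using Nat.strong_induction_on with
  | _ n ih =>
    match n with
    | 0 =>
      simp only [chebF, pow_zero, mul_one, Fintype.sum_bool, cval, if_true, if_false, Bool.false_eq_true]
      field_simp
      ring
    | 1 =>
      simp only [chebF, pow_one, Fintype.sum_bool, cval, tval, if_true, if_false, Bool.false_eq_true]
      field_simp
      ring
    | (n + 2) =>
      have hrec : chebF (n + 2) (ξ - ξ⁻¹)
          = (ξ - ξ⁻¹) * chebF (n + 1) (ξ - ξ⁻¹) + chebF n (ξ - ξ⁻¹) := rfl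
      rw [hrec, ih (n + 1) (by omega), ih n (by omega)]
      simp only [Fintype.sum_bool]
      rw [chebF_step _ _ httrue n, chebF_step _ _ htfalse n]
      ring

lemma walk_sign {V : Type} {G : SimpleGraph V} (σ : V → Bool) :
    ∀ {a b : V}, G.Walk a b → σ a ≠ σ b → ∃ x y, G.Adj x y ∧ σ x ≠ σ y := by
  intro a b w
  induction w with
  | nil => intro h; exact absurd rfl h
  | @cons u v w' hadj p ih =>
    intro h
    by_cases hcase : σ u = σ v
    · exact ih (fun hvw => h (hcase.trans hvw))
    · exact ⟨u, v, hadj, hcase⟩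

theorem stmt_9 {V E : Type} [Fintype V] [DecidableEq V] [Fintype E] [DecidableEq E]
    -- a finite connected simple graph
    (ep1 ep2 : E → V)
    (hloop : ∀ e, ep1 e ≠ ep2 e)
    (hsimple : ∀ e e',
      (ep1 e = ep1 e' ∧ ep2 e = ep2 e') ∨ (ep1 e = ep2 e' ∧ ep2 e = ep1 e') → e = e')
    (hconn : (SimpleGraph.fromRel fun a b => ∃ e, ep1 e = a ∧ ep2 e = b).Connected)
    (ξ : ℝ) (hξ : 0 < ξ) :
    theta ep1 ep2 1 ξ =
      (1 + ξ ^ (-2 : ℤ)) ^ Fintype.card E * (ξ / (ξ + ξ⁻¹)) ^ Fintype.card V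
      + (1 + ξ ^ (2 : ℤ)) ^ Fintype.card E * (ξ⁻¹ / (ξ + ξ⁻¹)) ^ Fintype.card V := by
  classical
  have hξ0 : ξ ≠ 0 := ne_of_gt hξ
  set t : Bool → ℝ := tval ξ with ht
  set c : Bool → ℝ := cval ξ with hc
  -- zero factor for mismatched spins
  have hzero : ∀ b b' : Bool, b ≠ b' → t b * t b' + 1 = 0 := by
    intro b b' h
    have h1 : t true * t false + 1 = 0 := by
      show ξ * -ξ⁻¹ + 1 = 0
      field_simp
      norm_num
    have h2 : t false * t true + 1 = 0 := by
      show -ξ⁻¹ * ξ + 1 = 0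
      field_simp
      norm_num
    cases b <;> cases b' <;> simp_all
  -- Step A: expand theta as a sum over spin configurations
  have stepA : theta ep1 ep2 1 ξ
      = ∑ σ : V → Bool, ∑ s : Finset E,
          ∏ i : V, (c (σ i) * t (σ i) ^ deg ep1 ep2 i s) := by
    rw [theta]
    simp only [one_pow, one_mul]
    have hch : ∀ s : Finset E, ∏ i : V, chebF (deg ep1 ep2 i s) (ξ - ξ⁻¹)
        = ∑ σ : V → Bool, ∏ i : V, (c (σ i) * t (σ i) ^ deg ep1 ep2 i s) := by
      intro s
      have h1 : ∀ i : V, chebF (deg ep1 ep2 i s) (ξ - ξ⁻¹)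
          = ∑ b : Bool, c b * t b ^ deg ep1 ep2 i s := fun i => chebF_eq ξ hξ _
      simp_rw [h1]
      rw [Finset.prod_univ_sum (fun _ : V => (Finset.univ : Finset Bool))
        (fun i b => c b * t b ^ deg ep1 ep2 i s), Fintype.piFinset_univ]
    simp_rw [hch]
    exact Finset.sum_comm
  -- Step B: evaluate the inner sum for a fixed spin configuration
  have stepB : ∀ σ : V → Bool,
      ∑ s : Finset E, ∏ i : V, (c (σ i) * t (σ i) ^ deg ep1 ep2 i s)
      = (∏ i : V, c (σ i)) * ∏ e : E, (t (σ (ep1 e)) * t (σ (ep2 e)) + 1) := by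
    intro σ
    have h1 : ∀ s : Finset E, ∏ i : V, (c (σ i) * t (σ i) ^ deg ep1 ep2 i s)
        = (∏ i : V, c (σ i)) * ∏ e ∈ s, (t (σ (ep1 e)) * t (σ (ep2 e))) := by
      intro s
      rw [Finset.prod_mul_distrib]
      congr 1
      have hdeg : ∀ i : V, deg ep1 ep2 i s
          = ∑ e ∈ s, (if ep1 e = i ∨ ep2 e = i then 1 else 0) := by
        intro i; rw [deg, Finset.card_filter]
      calc ∏ i : V, t (σ i) ^ deg ep1 ep2 i s
          = ∏ i : V, ∏ e ∈ s, t (σ i) ^ (if ep1 e = i ∨ ep2 e = i then 1 else 0) := by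
            refine Finset.prod_congr rfl fun i _ => ?_
            rw [hdeg i, Finset.prod_pow_eq_pow_sum]
        _ = ∏ e ∈ s, ∏ i : V, t (σ i) ^ (if ep1 e = i ∨ ep2 e = i then 1 else 0) :=
            Finset.prod_comm
        _ = ∏ e ∈ s, (t (σ (ep1 e)) * t (σ (ep2 e))) := by
            refine Finset.prod_congr rfl fun e _ => ?_
            have hne := hloop e
            calc ∏ i : V, t (σ i) ^ (if ep1 e = i ∨ ep2 e = i then 1 else 0)
                = ∏ i : V, ((if ep1 e = i then t (σ i) else 1)
                    * (if ep2 e = i then t (σ i) else 1)) := by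
                  refine Finset.prod_congr rfl fun i _ => ?_
                  by_cases h1 : ep1 e = i <;> by_cases h2 : ep2 e = i <;>
                    simp [h1, h2] <;> exact absurd (h1.trans h2.symm) hne
              _ = t (σ (ep1 e)) * t (σ (ep2 e)) := by
                  rw [Finset.prod_mul_distrib, Finset.prod_ite_eq, Finset.prod_ite_eq]
                  simp
    simp_rw [h1]
    rw [← Finset.mul_sum]
    congr 1
    have := Finset.prod_add (fun e : E => t (σ (ep1 e)) * t (σ (ep2 e)))
      (fun _ : E => (1 : ℝ)) Finset.univ
    simpa [Finset.powerset_univ] using this.symm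
  -- Step C: nonconstant spin configurations contribute zero
  have stepC : ∀ σ : V → Bool, σ ≠ (fun _ => true) → σ ≠ (fun _ => false) →
      ∏ e : E, (t (σ (ep1 e)) * t (σ (ep2 e)) + 1) = 0 := by
    intro σ h1 h2
    obtain ⟨a, ha⟩ : ∃ a, σ a = true := by
      by_contra h; push_neg at h
      exact h2 (funext fun v => by simpa using h v)
    obtain ⟨b, hb⟩ : ∃ b, σ b = false := by
      by_contra h; push_neg at h
      exact h1 (funext fun v => by simpa using h v)
    have hab : σ a ≠ σ b := by rw [ha, hb]; simp
    obtain ⟨w⟩ := hconn.preconnected a b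
    obtain ⟨x, y, hxy, hne⟩ := walk_sign σ w hab
    rw [SimpleGraph.fromRel_adj] at hxy
    rcases hxy.2 with ⟨e, he1, he2⟩ | ⟨e, he1, he2⟩
    · refine Finset.prod_eq_zero (Finset.mem_univ e) ?_
      rw [he1, he2]; exact hzero _ _ hne
    · refine Finset.prod_eq_zero (Finset.mem_univ e) ?_
      rw [he1, he2]; exact hzero _ _ (Ne.symm hne)
  -- Step D: reduce the sum over spins to the two constant configurations
  have hVne : Nonempty V := hconn.nonempty
  have hctcf : (fun _ : V => true) ≠ (fun _ : V => false) := by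
    intro h; obtain ⟨v⟩ := hVne
    exact absurd (congrFun h v) (by simp)
  have stepD : theta ep1 ep2 1 ξ
      = ((∏ i : V, c true) * ∏ e : E, (t true * t true + 1))
        + ((∏ i : V, c false) * ∏ e : E, (t false * t false + 1)) := by
    rw [stepA]
    simp_rw [stepB]
    rw [← Finset.sum_subset
      (Finset.subset_univ ({(fun _ => true), (fun _ => false)} : Finset (V → Bool)))
      (fun σ _ hσ => by
        simp only [Finset.mem_insert, Finset.mem_singleton, not_or] at hσ
        rw [stepC σ hσ.1 hσ.2, mul_zero])]
    rw [Finset.sum_pair hctcf]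
  -- Step E: final arithmetic
  rw [stepD]
  rw [Finset.prod_const, Finset.prod_const, Finset.prod_const, Finset.prod_const,
    Finset.card_univ, Finset.card_univ]
  have hctrue : c true = ξ⁻¹ / (ξ + ξ⁻¹) := rfl
  have hcfalse : c false = ξ / (ξ + ξ⁻¹) := rfl
  have httrue : t true = ξ := rfl
  have htfalse : t false = -ξ⁻¹ := rfl
  rw [hctrue, hcfalse, httrue, htfalse]
  have h2 : ξ ^ (2 : ℤ) = ξ * ξ := by
    rw [zpow_two]
  have hm2 : ξ ^ (-2 : ℤ) = -ξ⁻¹ * -ξ⁻¹ + 1 - 1 := by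
    rw [zpow_neg, zpow_two, mul_inv]; ring
  rw [h2, hm2]
  ring
end

section
/- Let G = (V,E) be a finite connected simple graph and n(G) := |E| − |V| + 1. Then θ_G(1, (1+√5)/2) = ((5 − √5)/2)^{n(G)−1} + ((5 + √5)/2)^{n(G)−1}. -/
lemma chebF_one_eq (n : ℕ) :
    Real.sqrt 5 * chebF n 1 =
      (1 + Real.sqrt 5) / 2 * ((1 - Real.sqrt 5) / 2) ^ n
      - (1 - Real.sqrt 5) / 2 * ((1 + Real.sqrt 5) / 2) ^ n := by
  have h5 : Real.sqrt 5 ^ 2 = 5 := Real.sq_sqrt (by norm_num)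
  induction n using Nat.twoStepInduction with
  | zero => show Real.sqrt 5 * 1 = _; ring
  | one => show Real.sqrt 5 * 0 = _; ring
  | more n ih1 ih2 =>
    rw [show chebF (n + 2) 1 = 1 * chebF (n + 1) 1 + chebF n 1 from rfl]
    linear_combination ih1 + ih2 +
      (((1 - Real.sqrt 5) / 2 * ((1 + Real.sqrt 5) / 2) ^ n
        - (1 + Real.sqrt 5) / 2 * ((1 - Real.sqrt 5) / 2) ^ n) / 4) * h5


lemma aux_prod_pow_deg {V E : Type} [Fintype V] [DecidableEq V] [Fintype E] [DecidableEq E]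
    (ep1 ep2 : E → V) (hloop : ∀ e, ep1 e ≠ ep2 e) (w : V → ℝ) (s : Finset E) :
    ∏ i : V, w i ^ deg ep1 ep2 i s = ∏ e ∈ s, (w (ep1 e) * w (ep2 e)) := by
  have h1 : ∀ i : V, w i ^ deg ep1 ep2 i s
      = ∏ e ∈ s, (if ep1 e = i ∨ ep2 e = i then w i else 1) := by
    intro i
    rw [deg, Finset.card_filter, ← Finset.prod_pow_eq_pow_sum]
    exact Finset.prod_congr rfl fun e _ => by split <;> simp
  simp_rw [h1]
  rw [Finset.prod_comm]
  refine Finset.prod_congr rfl fun e _ => ?_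
  rw [← Finset.prod_subset (Finset.subset_univ ({ep1 e, ep2 e} : Finset V))
      (fun x _ hx => by
        simp only [Finset.mem_insert, Finset.mem_singleton] at hx
        push_neg at hx
        rw [if_neg]
        rintro (h | h) <;> simp [h.symm] at hx)]
  rw [Finset.prod_pair (hloop e)]
  simp

lemma aux_sum_prod_subsets {E : Type} [Fintype E] [DecidableEq E] (c : E → ℝ) :
    ∑ s : Finset E, ∏ e ∈ s, c e = ∏ e : E, (1 + c e) := by
  have h := Finset.prod_add c (fun _ => (1 : ℝ)) Finset.univ
  simp only [Finset.prod_const_one, mul_one, Finset.powerset_univ] at h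
  rw [show (∏ e : E, (1 + c e)) = ∏ e : E, (c e + 1) from Finset.prod_congr rfl fun e _ => by ring]
  rw [h]

lemma aux_crossing' {V E : Type} (ep1 ep2 : E → V) [DecidableEq V]
    (hconn : (SimpleGraph.fromRel fun a b => ∃ e, ep1 e = a ∧ ep2 e = b).Connected)
    [Fintype V] (T : Finset V) (h1 : T ≠ ∅) (h2 : T ≠ Finset.univ) :
    ∃ e, (ep1 e ∈ T ∧ ep2 e ∉ T) ∨ (ep1 e ∉ T ∧ ep2 e ∈ T) := by
  obtain ⟨u, hu⟩ := Finset.nonempty_iff_ne_empty.mpr h1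
  obtain ⟨v, hv⟩ : ∃ v, v ∉ T := by
    by_contra h
    push_neg at h
    exact h2 (Finset.eq_univ_iff_forall.mpr h)
  obtain ⟨p⟩ := hconn.preconnected u v
  revert hu
  induction p with
  | nil => exact fun h => absurd h hv
  | @cons a b c hadj p ih =>
    intro ha
    by_cases hb : b ∈ T
    · exact ih hv hb
    · rw [SimpleGraph.fromRel_adj] at hadj
      rcases hadj with ⟨hne, (⟨e, he1, he2⟩ | ⟨e, he1, he2⟩)⟩
      · exact ⟨e, Or.inl ⟨by rw [he1]; exact ha, by rw [he2]; exact hb⟩⟩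
      · exact ⟨e, Or.inr ⟨by rw [he1]; exact hb, by rw [he2]; exact ha⟩⟩

lemma aux_card_bound {V E : Type} [Fintype V] [DecidableEq V] [Fintype E] [DecidableEq E]
    (ep1 ep2 : E → V)
    (hconn : (SimpleGraph.fromRel fun a b => ∃ e, ep1 e = a ∧ ep2 e = b).Connected) :
    Fintype.card V ≤ Fintype.card E + 1 := by
  classical
  set G := (SimpleGraph.fromRel fun a b => ∃ e, ep1 e = a ∧ ep2 e = b) with hG
  obtain ⟨r⟩ := hconn.nonempty
  have key : ∀ v : V, v ≠ r → ∃ e : E,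
      (ep1 e = v ∧ G.dist (ep2 e) r < G.dist v r) ∨
      (ep2 e = v ∧ G.dist (ep1 e) r < G.dist v r) := by
    intro v hv
    have hd : G.dist v r ≠ 0 := (hconn.pos_dist_of_ne hv).ne'
    obtain ⟨p, hp⟩ := SimpleGraph.exists_walk_of_dist_ne_zero hd
    cases p with
    | nil => exact absurd rfl hv
    | @cons a b c hadj q =>
      rw [SimpleGraph.Walk.length_cons] at hp
      have hq : G.dist b r < G.dist v r := by
        have := SimpleGraph.dist_le q
        omega
      rw [SimpleGraph.fromRel_adj] at hadj
      rcases hadj with ⟨hne, (⟨e, he1, he2⟩ | ⟨e, he1, he2⟩)⟩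
      · exact ⟨e, Or.inl ⟨he1, by rw [he2]; exact hq⟩⟩
      · exact ⟨e, Or.inr ⟨he2, by rw [he1]; exact hq⟩⟩
  choose f hf using fun v : {v : V // v ≠ r} => key v v.2
  have hinj : Function.Injective f := by
    intro x y hxy
    by_contra hne
    have hxyv : (x : V) ≠ (y : V) := fun h => hne (Subtype.ext h)
    have hfy := hf y
    rw [← hxy] at hfy
    rcases hf x with (⟨h1, h2⟩ | ⟨h1, h2⟩) <;> rcases hfy with (⟨h3, h4⟩ | ⟨h3, h4⟩)
    · exact hxyv (h1.symm.trans h3)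
    · rw [h3] at h2; rw [h1] at h4; omega
    · rw [h3] at h2; rw [h1] at h4; omega
    · exact hxyv (h1.symm.trans h3)
  have hle : Fintype.card {v : V // v ≠ r} ≤ Fintype.card E :=
    Fintype.card_le_of_injective f hinj
  have hcv : Fintype.card {v : V // v ≠ r} = Fintype.card V - 1 := by
    have := Set.card_ne_eq r (α := V)
    simpa using this
  have hpos : 0 < Fintype.card V := Fintype.card_pos_iff.mpr ⟨r⟩
  omega

theorem stmt_10 {V E : Type} [Fintype V] [DecidableEq V] [Fintype E] [DecidableEq E]
    -- a finite connected simple graph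
    (ep1 ep2 : E → V)
    (hloop : ∀ e, ep1 e ≠ ep2 e)
    (hsimple : ∀ e e',
      (ep1 e = ep1 e' ∧ ep2 e = ep2 e') ∨ (ep1 e = ep2 e' ∧ ep2 e = ep1 e') → e = e')
    (hconn : (SimpleGraph.fromRel fun a b => ∃ e, ep1 e = a ∧ ep2 e = b).Connected) :
    -- `n(G) = |E| - |V| + 1`, here computed as `|E| + 1 - |V|` in ℕ
    theta ep1 ep2 1 ((1 + Real.sqrt 5) / 2) =
      ((5 - Real.sqrt 5) / 2) ^ (((Fintype.card E + 1 - Fintype.card V : ℕ) : ℤ) - 1)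
      + ((5 + Real.sqrt 5) / 2) ^ (((Fintype.card E + 1 - Fintype.card V : ℕ) : ℤ) - 1) := by
  classical
  have h5 : Real.sqrt 5 ^ 2 = 5 := Real.sq_sqrt (by norm_num)
  have hs5 : 0 < Real.sqrt 5 := Real.sqrt_pos.mpr (by norm_num)
  have hs5lt : Real.sqrt 5 < 3 := by nlinarith
  set s5 := Real.sqrt 5 with hs5def
  set Φ : ℝ := (1 + s5) / 2 with hPhidef
  set Ψ : ℝ := (1 - s5) / 2 with hPsidef
  have hPhipos : 0 < Φ := by rw [hPhidef]; linarith
  have hPhiPsi : Φ * Ψ = -1 := by rw [hPhidef, hPsidef]; linear_combination (-1/4) * h5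
  have hA : (1 : ℝ) + Φ * Φ = (5 + s5) / 2 := by
    rw [hPhidef]; linear_combination (1/4) * h5
  have hB : (1 : ℝ) + Ψ * Ψ = (5 - s5) / 2 := by
    rw [hPsidef]; linear_combination (1/4) * h5
  have hApos : (0:ℝ) < 1 + Φ * Φ := by nlinarith
  have hBpos : (0:ℝ) < 1 + Ψ * Ψ := by nlinarith
  set cV := Fintype.card V with hcV
  set cE := Fintype.card E with hcE
  have hPhine : Φ ≠ 0 := ne_of_gt hPhipos
  have hxi : Φ - Φ⁻¹ = 1 := by
    have h2 : Φ * Φ = Φ + 1 := by rw [hPhidef]; linear_combination (1/4) * h5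
    field_simp
    linear_combination h2
  have step1 : theta ep1 ep2 1 Φ = ∑ s : Finset E, ∏ i : V, chebF (deg ep1 ep2 i s) 1 := by
    unfold theta
    rw [hxi]
    simp
  -- the weight function
  set w : Finset V → V → ℝ := fun T i => if i ∈ T then Ψ else Φ with hw
  have expand : ∀ s : Finset E,
      s5 ^ cV * ∏ i : V, chebF (deg ep1 ep2 i s) 1
      = ∑ T ∈ (Finset.univ : Finset V).powerset,
          (Φ ^ T.card * (-Ψ) ^ (Finset.univ \ T).card)
            * ∏ e ∈ s, (w T (ep1 e) * w T (ep2 e)) := by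
    intro s
    have e1 : s5 ^ cV * ∏ i : V, chebF (deg ep1 ep2 i s) 1
        = ∏ i : V, (Φ * Ψ ^ (deg ep1 ep2 i s) + (-Ψ) * Φ ^ (deg ep1 ep2 i s)) := by
      rw [hcV, ← Finset.card_univ, ← Finset.prod_const, ← Finset.prod_mul_distrib]
      refine Finset.prod_congr rfl fun i _ => ?_
      rw [hs5def, chebF_one_eq]
      rw [hPhidef, hPsidef]
      ring
    rw [e1, Finset.prod_add]
    refine Finset.sum_congr rfl fun T hT => ?_
    rw [Finset.prod_mul_distrib, Finset.prod_mul_distrib, Finset.prod_const,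
      Finset.prod_const]
    rw [← aux_prod_pow_deg ep1 ep2 hloop (w T) s]
    have e2 : ∏ i : V, w T i ^ deg ep1 ep2 i s
        = (∏ i ∈ Finset.univ \ T, w T i ^ deg ep1 ep2 i s)
          * ∏ i ∈ T, w T i ^ deg ep1 ep2 i s := by
      rw [Finset.prod_sdiff (Finset.mem_powerset.mp hT)]
    rw [e2]
    have e3 : ∏ i ∈ T, w T i ^ deg ep1 ep2 i s = ∏ i ∈ T, Ψ ^ deg ep1 ep2 i s :=
      Finset.prod_congr rfl fun i hi => by rw [hw]; simp [hi]
    have e4 : ∏ i ∈ Finset.univ \ T, w T i ^ deg ep1 ep2 i s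
        = ∏ i ∈ Finset.univ \ T, Φ ^ deg ep1 ep2 i s :=
      Finset.prod_congr rfl fun i hi => by
        rw [hw]; simp [(Finset.mem_sdiff.mp hi).2]
    rw [e3, e4]
    ring
  have main : s5 ^ cV * theta ep1 ep2 1 Φ
      = (-Ψ) ^ cV * (1 + Φ * Φ) ^ cE + Φ ^ cV * (1 + Ψ * Ψ) ^ cE := by
    rw [step1, Finset.mul_sum]
    simp_rw [expand]
    rw [Finset.sum_comm]
    have inner : ∀ T ∈ (Finset.univ : Finset V).powerset,
        ∑ s : Finset E, (Φ ^ T.card * (-Ψ) ^ (Finset.univ \ T).card)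
            * ∏ e ∈ s, (w T (ep1 e) * w T (ep2 e))
        = (Φ ^ T.card * (-Ψ) ^ (Finset.univ \ T).card)
            * ∏ e : E, (1 + w T (ep1 e) * w T (ep2 e)) := by
      intro T _
      rw [← Finset.mul_sum, aux_sum_prod_subsets]
    rw [Finset.sum_congr rfl inner]
    have hV : Nonempty V := hconn.nonempty
    have hne : (∅ : Finset V) ≠ Finset.univ := by
      intro h
      exact (Finset.univ_nonempty (α := V)).ne_empty h.symm
    have hsub : ({∅, Finset.univ} : Finset (Finset V)) ⊆ (Finset.univ : Finset V).powerset := by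
      intro T _
      exact Finset.mem_powerset.mpr (Finset.subset_univ T)
    have hvanish : ∀ T ∈ (Finset.univ : Finset V).powerset,
        T ∉ ({∅, Finset.univ} : Finset (Finset V)) →
        (Φ ^ T.card * (-Ψ) ^ (Finset.univ \ T).card)
            * ∏ e : E, (1 + w T (ep1 e) * w T (ep2 e)) = 0 := by
      intro T _ hT
      simp only [Finset.mem_insert, Finset.mem_singleton] at hT
      push_neg at hT
      obtain ⟨e0, he0⟩ := aux_crossing' ep1 ep2 hconn T hT.1.ne_empty hT.2
      have hz : 1 + w T (ep1 e0) * w T (ep2 e0) = 0 := by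
        rcases he0 with (⟨ha, hb⟩ | ⟨ha, hb⟩)
        · simp only [hw]
          rw [if_pos ha, if_neg hb]
          linear_combination hPhiPsi
        · simp only [hw]
          rw [if_neg ha, if_pos hb]
          linear_combination hPhiPsi
      rw [Finset.prod_eq_zero (Finset.mem_univ e0) hz, mul_zero]
    rw [← Finset.sum_subset hsub hvanish, Finset.sum_pair hne]
    have t1 : (Φ ^ (∅ : Finset V).card * (-Ψ) ^ (Finset.univ \ (∅ : Finset V)).card)
        * ∏ e : E, (1 + w ∅ (ep1 e) * w ∅ (ep2 e)) = (-Ψ) ^ cV * (1 + Φ * Φ) ^ cE := by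
      have : ∀ e : E, 1 + w (∅ : Finset V) (ep1 e) * w ∅ (ep2 e) = 1 + Φ * Φ := by
        intro e; rw [hw]; simp
      rw [Finset.prod_congr rfl fun e _ => this e, Finset.prod_const]
      simp [hcV, hcE]
    have t2 : (Φ ^ (Finset.univ : Finset V).card
          * (-Ψ) ^ (Finset.univ \ (Finset.univ : Finset V)).card)
        * ∏ e : E, (1 + w Finset.univ (ep1 e) * w Finset.univ (ep2 e))
        = Φ ^ cV * (1 + Ψ * Ψ) ^ cE := by
      have : ∀ e : E, 1 + w (Finset.univ : Finset V) (ep1 e) * w Finset.univ (ep2 e)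
          = 1 + Ψ * Ψ := by
        intro e; rw [hw]; simp
      rw [Finset.prod_congr rfl fun e _ => this e, Finset.prod_const]
      simp [hcV, hcE]
    rw [t1, t2]
  -- endgame
  have hcard : cV ≤ cE + 1 := aux_card_bound ep1 ep2 hconn
  have hexp : ((cE + 1 - cV : ℕ) : ℤ) - 1 = (cE : ℤ) - (cV : ℤ) := by
    rw [Nat.cast_sub hcard]
    push_cast
    ring
  rw [hexp, ← hA, ← hB]
  have hAne : (1 : ℝ) + Φ * Φ ≠ 0 := ne_of_gt hApos
  have hBne : (1 : ℝ) + Ψ * Ψ ≠ 0 := ne_of_gt hBpos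
  rw [zpow_sub₀ hBne, zpow_sub₀ hAne, zpow_natCast, zpow_natCast, zpow_natCast, zpow_natCast]
  apply mul_left_cancel₀ (pow_ne_zero cV (ne_of_gt hs5))
  rw [main]
  have hPhiB : Φ * (1 + Ψ * Ψ) = s5 := by
    rw [hPhidef, hPsidef]; linear_combination ((s5 - 1) / 8) * h5
  have hPsiA : (-Ψ) * (1 + Φ * Φ) = s5 := by
    rw [hPhidef, hPsidef]; linear_combination ((s5 + 1) / 8) * h5
  have key2 : ∀ (u x : ℝ), x ≠ 0 → ∀ n m : ℕ, (u * x) ^ n * (x ^ m / x ^ n) = u ^ n * x ^ m := by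
    intro u x hx n m
    rw [mul_pow]
    field_simp
  rw [mul_add]
  rw [show s5 ^ cV * ((1 + Ψ * Ψ) ^ cE / (1 + Ψ * Ψ) ^ cV) = Φ ^ cV * (1 + Ψ * Ψ) ^ cE from by
    rw [← hPhiB]; exact key2 Φ _ hBne cV cE]
  rw [show s5 ^ cV * ((1 + Φ * Φ) ^ cE / (1 + Φ * Φ) ^ cV) = (-Ψ) ^ cV * (1 + Φ * Φ) ^ cE from by
    rw [← hPsiA]; exact key2 (-Ψ) _ hAne cV cE]
  ring
end

section
/- Let G = (V,E) be a finite connected simple graph, n(G) := |E| − |V| + 1, and let 𝒢₀ := { s ⊆ E : d_i(s) ≠ 1 for all i ∈ V } be the set of all generalized loops of G together with the empty set. Then |𝒢₀| ≤ ((5 − √5)/2)^{n(G)−1} + ((5 + √5)/2)^{n(G)−1}, and equality holds if and only if every s ∈ 𝒢₀ satisfies d_i(s) ≤ 3 for all i ∈ V. -/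
open Finset

noncomputable section GLaux

def glMu (c : Bool) : ℝ := if c then (1 + Real.sqrt 5) / 2 else (1 - Real.sqrt 5) / 2
def glLa (c : Bool) : ℝ := (1 + glMu c ^ 2)⁻¹
def glH (d : ℕ) : ℝ := ∑ c : Bool, glLa c * glMu c ^ d

lemma sqrt5_sq : Real.sqrt 5 ^ 2 = 5 := Real.sq_sqrt (by norm_num)
lemma sqrt5_pos : 0 < Real.sqrt 5 := Real.sqrt_pos.2 (by norm_num)
lemma sqrt5_lt : Real.sqrt 5 < 3 := by nlinarith [sqrt5_sq, sqrt5_pos]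

lemma glMu_true : glMu true = (1 + Real.sqrt 5) / 2 := rfl
lemma glMu_false : glMu false = (1 - Real.sqrt 5) / 2 := rfl

lemma glMuSq (c : Bool) : glMu c ^ 2 = glMu c + 1 := by
  cases c <;> rw [glMu] <;> norm_num <;> nlinarith [sqrt5_sq]

lemma onePlusMuSq_true : 1 + glMu true ^ 2 = (5 + Real.sqrt 5) / 2 := by
  rw [glMu_true]; nlinarith [sqrt5_sq]

lemma onePlusMuSq_false : 1 + glMu false ^ 2 = (5 - Real.sqrt 5) / 2 := by
  rw [glMu_false]; nlinarith [sqrt5_sq]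

lemma onePlusMuSq_pos (c : Bool) : 0 < 1 + glMu c ^ 2 := by
  cases c
  · rw [onePlusMuSq_false]; nlinarith [sqrt5_lt, sqrt5_pos]
  · rw [onePlusMuSq_true]; nlinarith [sqrt5_pos]

lemma glMu_mul : glMu true * glMu false = -1 := by
  rw [glMu_true, glMu_false]; nlinarith [sqrt5_sq]

lemma glH_expand (d : ℕ) :
    glH d = glLa true * glMu true ^ d + glLa false * glMu false ^ d := by
  rw [glH, Fintype.sum_bool]

lemma glH_zero : glH 0 = 1 := by
  have h1 := onePlusMuSq_pos true
  have h2 := onePlusMuSq_pos false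
  rw [glH_expand]
  simp only [glLa, pow_zero, mul_one]
  rw [onePlusMuSq_true, onePlusMuSq_false] at *
  have n1 : (5 + Real.sqrt 5) ≠ 0 := by nlinarith [sqrt5_pos]
  have n2 : (5 - Real.sqrt 5) ≠ 0 := by nlinarith [sqrt5_lt]
  field_simp
  nlinarith [sqrt5_sq]

lemma glH_one : glH 1 = 0 := by
  have h1 := onePlusMuSq_pos true
  have h2 := onePlusMuSq_pos false
  rw [glH_expand]
  simp only [glLa, pow_one]
  rw [onePlusMuSq_true, onePlusMuSq_false] at *
  rw [glMu_true, glMu_false]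
  have n1 : (5 + Real.sqrt 5) ≠ 0 := by nlinarith [sqrt5_pos]
  have n2 : (5 - Real.sqrt 5) ≠ 0 := by nlinarith [sqrt5_lt]
  field_simp
  nlinarith [sqrt5_sq]

lemma glH_rec (d : ℕ) : glH (d + 2) = glH (d + 1) + glH d := by
  rw [glH_expand, glH_expand, glH_expand]
  have e1 : ∀ c : Bool, glMu c ^ (d + 2) = glMu c ^ (d + 1) + glMu c ^ d := by
    intro c
    have h : glMu c ^ (d + 2) = glMu c ^ d * glMu c ^ 2 := by ring
    rw [h, glMuSq]; ring
  rw [e1 true, e1 false]; ring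

lemma glH_two : glH 2 = 1 := by
  have := glH_rec 0; rw [glH_zero, glH_one] at this; linarith

lemma glH_three : glH 3 = 1 := by
  have := glH_rec 1; rw [glH_two, glH_one] at this; linarith

lemma glH_pair (d : ℕ) : 1 ≤ glH (d + 2) ∧ 0 ≤ glH (d + 1) := by
  induction d with
  | zero => rw [glH_two, glH_one]; norm_num
  | succ n ih =>
    have hr := glH_rec (n + 1)
    exact ⟨by rw [hr]; linarith [ih.1, ih.2], by linarith [ih.1]⟩

lemma glH_nonneg (d : ℕ) : 0 ≤ glH d := by
  match d with
  | 0 => rw [glH_zero]; norm_num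
  | 1 => rw [glH_one]
  | (n+2) => linarith [(glH_pair n).1]

lemma glH_one_le (d : ℕ) (hd : d ≠ 1) : 1 ≤ glH d := by
  match d with
  | 0 => rw [glH_zero]
  | 1 => exact absurd rfl hd
  | (n+2) => exact (glH_pair n).1

lemma glH_two_le (d : ℕ) (hd : 4 ≤ d) : 2 ≤ glH d := by
  obtain ⟨k, rfl⟩ : ∃ k, d = k + 4 := ⟨d - 4, by omega⟩
  have hr := glH_rec (k + 2)
  have h1 := (glH_pair (k + 1)).1
  have h2 := (glH_pair k).1
  rw [show k + 2 + 2 = k + 4 by ring, show k + 2 + 1 = (k + 1) + 2 by ring] at hr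
  rw [hr]; linarith

lemma glH_eq_one (d : ℕ) (h1 : d ≠ 1) (h3 : d ≤ 3) : glH d = 1 := by
  interval_cases d
  · exact glH_zero
  · exact absurd rfl h1
  · exact glH_two
  · exact glH_three

end GLaux

section GLmain

lemma gl_one_le_prod {ι : Type*} {s : Finset ι} {f : ι → ℝ} (h : ∀ i ∈ s, 1 ≤ f i) :
    1 ≤ ∏ i ∈ s, f i := by
  calc (1:ℝ) = ∏ _i ∈ s, 1 := by simp
  _ ≤ ∏ i ∈ s, f i := Finset.prod_le_prod (by simp) h

lemma gl_exists_adj_ne {V : Type} {G : SimpleGraph V} (σ : V → Bool) {u v : V}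
    (p : G.Walk u v) (h : σ u ≠ σ v) : ∃ a b, G.Adj a b ∧ σ a ≠ σ b := by
  induction p with
  | nil => exact absurd rfl h
  | @cons u w v hadj p ih =>
    by_cases hc : σ u = σ w
    · exact ih (by rw [← hc]; exact h)
    · exact ⟨u, w, hadj, hc⟩

lemma glMu_mul_ne {x y : Bool} (h : x ≠ y) : glMu x * glMu y = -1 := by
  cases x <;> cases y <;> simp_all
  · rw [mul_comm]; exact glMu_mul
  · exact glMu_mul

lemma gl_pow_inv_pow (x : ℝ) (hx : x ≠ 0) (m n : ℕ) :
    (x⁻¹) ^ m * x ^ n = x ^ ((n : ℤ) - (m : ℤ)) := by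
  rw [zpow_sub₀ hx, zpow_natCast, zpow_natCast, div_eq_mul_inv, ← inv_pow]; ring

variable {V E : Type} [Fintype V] [DecidableEq V] [Fintype E] [DecidableEq E]

lemma gl_prod_mu (ep1 ep2 : E → V) (hloop : ∀ e, ep1 e ≠ ep2 e) (σ : V → Bool)
    (s : Finset E) :
    ∏ i : V, glMu (σ i) ^ deg ep1 ep2 i s
      = ∏ e ∈ s, (glMu (σ (ep1 e)) * glMu (σ (ep2 e))) := by
  calc ∏ i : V, glMu (σ i) ^ deg ep1 ep2 i s
      = ∏ i : V, ∏ _e ∈ s.filter (fun e => ep1 e = i ∨ ep2 e = i), glMu (σ i) := by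
        refine Finset.prod_congr rfl fun i _ => ?_
        rw [Finset.prod_const, deg]
    _ = ∏ i : V, ∏ e ∈ s, if ep1 e = i ∨ ep2 e = i then glMu (σ i) else 1 := by
        refine Finset.prod_congr rfl fun i _ => ?_
        rw [Finset.prod_filter]
    _ = ∏ e ∈ s, ∏ i : V, if ep1 e = i ∨ ep2 e = i then glMu (σ i) else 1 :=
        Finset.prod_comm
    _ = ∏ e ∈ s, (glMu (σ (ep1 e)) * glMu (σ (ep2 e))) := by
        refine Finset.prod_congr rfl fun e _ => ?_
        rw [← Finset.prod_filter]
        have hfe : Finset.univ.filter (fun i => ep1 e = i ∨ ep2 e = i)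
            = {ep1 e, ep2 e} := by
          ext i
          simp only [Finset.mem_filter, Finset.mem_univ, true_and, Finset.mem_insert,
            Finset.mem_singleton]
          constructor
          · rintro (h | h) <;> [left; right] <;> exact h.symm
          · rintro (h | h) <;> [left; right] <;> exact h.symm
        rw [hfe]
        rw [Finset.prod_insert (by simp [hloop e]), Finset.prod_singleton]

lemma gl_key_sum (ep1 ep2 : E → V) (hloop : ∀ e, ep1 e ≠ ep2 e)
    (hconn : (SimpleGraph.fromRel fun a b => ∃ e, ep1 e = a ∧ ep2 e = b).Connected) :
    ∑ s : Finset E, ∏ i : V, glH (deg ep1 ep2 i s)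
      = ((5 - Real.sqrt 5) / 2) ^ ((Fintype.card E : ℤ) - (Fintype.card V : ℤ))
      + ((5 + Real.sqrt 5) / 2) ^ ((Fintype.card E : ℤ) - (Fintype.card V : ℤ)) := by
  have hne : Nonempty V := hconn.nonempty
  obtain ⟨v0⟩ := hne
  -- step 1: expand h as sum over colorings and swap
  have step1 : ∑ s : Finset E, ∏ i : V, glH (deg ep1 ep2 i s)
      = ∑ σ : V → Bool, ∑ s : Finset E,
          ∏ i : V, (glLa (σ i) * glMu (σ i) ^ deg ep1 ep2 i s) := by
    rw [Finset.sum_comm]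
    refine Finset.sum_congr rfl fun s _ => ?_
    simp only [glH]
    exact Fintype.prod_sum _
  -- step 2: compute the inner sum for each coloring
  have step2 : ∀ σ : V → Bool,
      ∑ s : Finset E, ∏ i : V, (glLa (σ i) * glMu (σ i) ^ deg ep1 ep2 i s)
        = (∏ i : V, glLa (σ i))
          * ∏ e : E, (1 + glMu (σ (ep1 e)) * glMu (σ (ep2 e))) := by
    intro σ
    have : ∀ s : Finset E, ∏ i : V, (glLa (σ i) * glMu (σ i) ^ deg ep1 ep2 i s)
        = (∏ i : V, glLa (σ i)) * ∏ e ∈ s, (glMu (σ (ep1 e)) * glMu (σ (ep2 e))) := by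
      intro s
      rw [Finset.prod_mul_distrib, gl_prod_mu ep1 ep2 hloop σ s]
    simp only [this]
    rw [← Finset.mul_sum]
    congr 1
    have := Fintype.prod_add (fun e => glMu (σ (ep1 e)) * glMu (σ (ep2 e))) (fun _ => (1:ℝ))
    simp only [Finset.prod_const_one, mul_one] at this
    rw [← this]
    exact Finset.prod_congr rfl fun e _ => (add_comm _ _)
  -- step 3: non-constant colorings give zero
  have step3 : ∀ σ : V → Bool, σ ≠ (fun _ => true) → σ ≠ (fun _ => false) →
      ∏ e : E, (1 + glMu (σ (ep1 e)) * glMu (σ (ep2 e))) = 0 := by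
    intro σ h1 h2
    have hex : ∃ u v, σ u ≠ σ v := by
      by_contra h
      push_neg at h
      cases hb : σ v0 with
      | true => exact h1 (funext fun u => (h u v0).trans hb)
      | false => exact h2 (funext fun u => (h u v0).trans hb)
    obtain ⟨u, v, huv⟩ := hex
    obtain ⟨a, b, hab, hne'⟩ :=
      gl_exists_adj_ne σ ((hconn.preconnected u v).some) huv
    rw [SimpleGraph.fromRel_adj] at hab
    obtain ⟨-, (⟨e, he1, he2⟩ | ⟨e, he1, he2⟩)⟩ := hab
    · refine Finset.prod_eq_zero (Finset.mem_univ e) ?_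
      rw [he1, he2, glMu_mul_ne hne']; ring
    · refine Finset.prod_eq_zero (Finset.mem_univ e) ?_
      rw [he1, he2, glMu_mul_ne (by rw [he1, he2] at *; exact (Ne.symm hne'))]; ring
  -- step 4: restrict to the two constant colorings
  have hc12 : (fun _ : V => true) ≠ (fun _ : V => false) := by
    intro h
    have := congrFun h v0
    simp at this
  rw [step1]
  simp only [step2]
  have step4 : ∑ σ : V → Bool, (∏ i : V, glLa (σ i))
        * ∏ e : E, (1 + glMu (σ (ep1 e)) * glMu (σ (ep2 e)))
      = ∑ σ ∈ ({(fun _ => true), (fun _ => false)} : Finset (V → Bool)),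
          (∏ i : V, glLa (σ i))
            * ∏ e : E, (1 + glMu (σ (ep1 e)) * glMu (σ (ep2 e))) := by
    refine (Finset.sum_subset (Finset.subset_univ _) fun σ _ hσ => ?_).symm
    simp only [Finset.mem_insert, Finset.mem_singleton] at hσ
    push_neg at hσ
    rw [step3 σ hσ.1 hσ.2, mul_zero]
  rw [step4, Finset.sum_pair hc12]
  have hB := onePlusMuSq_pos true
  have hA := onePlusMuSq_pos false
  have hterm : ∀ c : Bool, (∏ _i : V, glLa c) * ∏ _e : E, (1 + glMu c * glMu c)
      = (1 + glMu c ^ 2) ^ ((Fintype.card E : ℤ) - (Fintype.card V : ℤ)) := by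
    intro c
    rw [Finset.prod_const, Finset.prod_const, Finset.card_univ, Finset.card_univ]
    have : 1 + glMu c * glMu c = 1 + glMu c ^ 2 := by ring
    rw [this, glLa]
    exact gl_pow_inv_pow _ (ne_of_gt (onePlusMuSq_pos c)) _ _
  rw [hterm true, hterm false, onePlusMuSq_true, onePlusMuSq_false]
  ring

end GLmain
theorem stmt_11 {V E : Type} [Fintype V] [DecidableEq V] [Fintype E] [DecidableEq E]
    -- a finite connected simple graph
    (ep1 ep2 : E → V)
    (hloop : ∀ e, ep1 e ≠ ep2 e)
    (hsimple : ∀ e e',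
      (ep1 e = ep1 e' ∧ ep2 e = ep2 e') ∨ (ep1 e = ep2 e' ∧ ep2 e = ep1 e') → e = e')
    (hconn : (SimpleGraph.fromRel fun a b => ∃ e, ep1 e = a ∧ ep2 e = b).Connected)
    -- `G0` is the set of generalized loops together with the empty set
    (G0 : Finset (Finset E))
    (hG0 : G0 = Finset.univ.filter fun s => ∀ i : V, deg ep1 ep2 i s ≠ 1) :
    -- `n(G) = |E| - |V| + 1`, here computed as `|E| + 1 - |V|` in ℕ
    (G0.card : ℝ) ≤
        ((5 - Real.sqrt 5) / 2) ^ (((Fintype.card E + 1 - Fintype.card V : ℕ) : ℤ) - 1)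
        + ((5 + Real.sqrt 5) / 2) ^ (((Fintype.card E + 1 - Fintype.card V : ℕ) : ℤ) - 1)
    ∧ ((G0.card : ℝ) =
        ((5 - Real.sqrt 5) / 2) ^ (((Fintype.card E + 1 - Fintype.card V : ℕ) : ℤ) - 1)
        + ((5 + Real.sqrt 5) / 2) ^ (((Fintype.card E + 1 - Fintype.card V : ℕ) : ℤ) - 1)
      ↔ ∀ s ∈ G0, ∀ i : V, deg ep1 ep2 i s ≤ 3) := by
  classical
  have hS := gl_key_sum ep1 ep2 hloop hconn
  -- the cardinality of G0 as a sum of indicator products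
  have hmem : ∀ s : Finset E, s ∈ G0 ↔ ∀ i : V, deg ep1 ep2 i s ≠ 1 := by
    intro s
    rw [hG0, Finset.mem_filter]
    simp
  have hcard : (G0.card : ℝ)
      = ∑ s : Finset E, ∏ i : V, (if deg ep1 ep2 i s = 1 then (0:ℝ) else 1) := by
    rw [hG0, Finset.card_filter]
    push_cast
    refine Finset.sum_congr rfl fun s _ => ?_
    by_cases hs : ∀ i : V, deg ep1 ep2 i s ≠ 1
    · rw [if_pos hs, Finset.prod_eq_one]
      intro i _
      rw [if_neg (hs i)]
    · rw [if_neg hs]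
      push_neg at hs
      obtain ⟨i, hi⟩ := hs
      exact (Finset.prod_eq_zero (Finset.mem_univ i) (by rw [if_pos hi])).symm
  -- termwise comparison
  have hterm_le : ∀ s : Finset E,
      (∏ i : V, (if deg ep1 ep2 i s = 1 then (0:ℝ) else 1))
        ≤ ∏ i : V, glH (deg ep1 ep2 i s) := by
    intro s
    by_cases hs : ∀ i : V, deg ep1 ep2 i s ≠ 1
    · have h1 : (∏ i : V, (if deg ep1 ep2 i s = 1 then (0:ℝ) else 1)) = 1 :=
        Finset.prod_eq_one fun i _ => by rw [if_neg (hs i)]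
      rw [h1]
      exact gl_one_le_prod fun i _ => glH_one_le _ (hs i)
    · push_neg at hs
      obtain ⟨i, hi⟩ := hs
      rw [Finset.prod_eq_zero (Finset.mem_univ i) (by rw [if_pos hi])]
      exact Finset.prod_nonneg fun i _ => glH_nonneg _
  have hsum_le : (G0.card : ℝ) ≤ ∑ s : Finset E, ∏ i : V, glH (deg ep1 ep2 i s) := by
    rw [hcard]
    exact Finset.sum_le_sum fun s _ => hterm_le s
  -- the empty set is a generalized loop, so G0 is nonempty
  have hone : (1 : ℝ) ≤ G0.card := by
    have : (∅ : Finset E) ∈ G0 := by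
      rw [hmem]
      intro i
      simp [deg]
    have := Finset.card_pos.2 ⟨∅, this⟩
    exact_mod_cast this
  -- hence the exponent is at least -1
  have hA1 : (1:ℝ) ≤ (5 - Real.sqrt 5) / 2 := by nlinarith [sqrt5_lt, sqrt5_pos]
  have hB1 : (1:ℝ) ≤ (5 + Real.sqrt 5) / 2 := by nlinarith [sqrt5_pos]
  have hm : -1 ≤ (Fintype.card E : ℤ) - (Fintype.card V : ℤ) := by
    by_contra h
    push_neg at h
    have h2 : (Fintype.card E : ℤ) - (Fintype.card V : ℤ) ≤ -2 := by omega
    have hA2 : ((5 - Real.sqrt 5) / 2) ^ ((Fintype.card E : ℤ) - (Fintype.card V : ℤ))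
        ≤ ((5 - Real.sqrt 5) / 2) ^ (-2 : ℤ) := zpow_le_zpow_right₀ hA1 h2
    have hB2 : ((5 + Real.sqrt 5) / 2) ^ ((Fintype.card E : ℤ) - (Fintype.card V : ℤ))
        ≤ ((5 + Real.sqrt 5) / 2) ^ (-2 : ℤ) := zpow_le_zpow_right₀ hB1 h2
    have hval : ((5 - Real.sqrt 5) / 2) ^ (-2 : ℤ) + ((5 + Real.sqrt 5) / 2) ^ (-2 : ℤ)
        = 3 / 5 := by
      rw [zpow_neg, zpow_neg, zpow_two, zpow_two]
      have n1 : (5 + Real.sqrt 5) ≠ 0 := by nlinarith [sqrt5_pos]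
      have n2 : (5 - Real.sqrt 5) ≠ 0 := by nlinarith [sqrt5_lt]
      field_simp
      nlinarith [sqrt5_sq]
    have := hsum_le
    rw [hS] at this
    linarith
  -- rewrite the exponent
  have hVE : Fintype.card V ≤ Fintype.card E + 1 := by
    have : (Fintype.card V : ℤ) ≤ (Fintype.card E : ℤ) + 1 := by linarith
    exact_mod_cast this
  have hexp : ((Fintype.card E + 1 - Fintype.card V : ℕ) : ℤ) - 1
      = (Fintype.card E : ℤ) - (Fintype.card V : ℤ) := by
    rw [Nat.cast_sub hVE]
    push_cast
    ring
  rw [hexp]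
  rw [← hS]
  constructor
  · exact hsum_le
  constructor
  · -- equality implies every generalized loop is subcubic
    intro heq
    by_contra hcond
    push_neg at hcond
    obtain ⟨s0, hs0, i0, hi0⟩ := hcond
    have hvalid : ∀ i : V, deg ep1 ep2 i s0 ≠ 1 := (hmem s0).1 hs0
    have hstrict : (∏ i : V, (if deg ep1 ep2 i s0 = 1 then (0:ℝ) else 1))
        < ∏ i : V, glH (deg ep1 ep2 i s0) := by
      have h1 : (∏ i : V, (if deg ep1 ep2 i s0 = 1 then (0:ℝ) else 1)) = 1 :=
        Finset.prod_eq_one fun i _ => by rw [if_neg (hvalid i)]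
      rw [h1, ← Finset.mul_prod_erase Finset.univ _ (Finset.mem_univ i0)]
      have h2 : (2:ℝ) ≤ glH (deg ep1 ep2 i0 s0) := glH_two_le _ (by omega)
      have h3 : (1:ℝ) ≤ ∏ i ∈ Finset.univ.erase i0, glH (deg ep1 ep2 i s0) :=
        gl_one_le_prod fun i _ => glH_one_le _ (hvalid i)
      nlinarith
    have hlt : (G0.card : ℝ) < ∑ s : Finset E, ∏ i : V, glH (deg ep1 ep2 i s) := by
      rw [hcard]
      exact Finset.sum_lt_sum (fun s _ => hterm_le s) ⟨s0, Finset.mem_univ s0, hstrict⟩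
    linarith [heq, hlt]
  · -- subcubic generalized loops imply equality
    intro hcond
    rw [hcard]
    refine Finset.sum_congr rfl fun s _ => ?_
    by_cases hs : ∀ i : V, deg ep1 ep2 i s ≠ 1
    · have hsub : ∀ i : V, deg ep1 ep2 i s ≤ 3 := hcond s ((hmem s).2 hs)
      refine Finset.prod_congr rfl fun i _ => ?_
      rw [if_neg (hs i), glH_eq_one _ (hs i) (hsub i)]
    · push_neg at hs
      obtain ⟨i, hi⟩ := hs
      rw [Finset.prod_eq_zero (Finset.mem_univ i) (by rw [if_pos hi]),
        Finset.prod_eq_zero (Finset.mem_univ i) (by rw [hi]; exact glH_one)]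
end

section
/- Let G be a finite multigraph and e an edge of G whose two endpoints u, v are distinct (a non-loop edge). Let G∖e be the multigraph obtained by deleting e (same vertices, edge set E∖{e}), and G/e the multigraph obtained by contracting e (vertex set the quotient of V identifying u and v, edge set E∖{e} with incidence composed with the quotient map). Then for all real β and all real ξ > 0, θ_G(β,ξ) = (1 − β) θ_{G∖e}(β,ξ) + β θ_{G/e}(β,ξ). -/
/-- `degM ep1 ep2 i s` is the degree of the node `i` in the multigraph edge
subset `s`; a loop at `i` counts twice. -/
def degM {V E : Type} [DecidableEq V] [DecidableEq E] (ep1 ep2 : E → V) (i : V)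
    (s : Finset E) : ℕ :=
  (s.filter fun e => ep1 e = i).card + (s.filter fun e => ep2 e = i).card

/-- The multigraph polynomial
`θ_G(β,ξ) = Σ_{s ⊆ E} β^{|s|} Π_{i∈V} f_{d_i(s)}(ξ - ξ⁻¹)`. -/
noncomputable def thetaM {V E : Type} [Fintype V] [DecidableEq V] [Fintype E] [DecidableEq E]
    (ep1 ep2 : E → V) (β ξ : ℝ) : ℝ :=
  ∑ s : Finset E, β ^ s.card * ∏ i : V, chebF (degM ep1 ep2 i s) (ξ - ξ⁻¹)

lemma chebF_add (x : ℝ) : ∀ a b : ℕ, chebF (a + b) x = chebF a x * chebF b x + chebF (a+1) x * chebF (b+1) x := by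
  intro a
  induction a using Nat.twoStepInduction with
  | zero => intro b; simp [chebF]
  | one =>
      intro b
      have h2 : chebF 2 x = 1 := by simp [chebF]
      simp [h2, Nat.add_comm 1 b, chebF]
  | more a ih1 ih2 =>
      intro b
      have e1 : a + 2 + b = (a + b) + 2 := by omega
      have e2 : a + 1 + b = (a + b) + 1 := by omega
      rw [e1, show chebF ((a+b)+2) x = x * chebF ((a+b)+1) x + chebF (a+b) x from rfl,
        ← e2, ih1 b, ih2 b,
        show chebF (a+3) x = x * chebF (a+2) x + chebF (a+1) x from rfl,
        show chebF (a+2) x = x * chebF (a+1) x + chebF a x from rfl]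
      ring

lemma filt_con {α V : Type} [DecidableEq α] [DecidableEq V] {u v : V} (h0 : u ≠ v)
    (ep : α → V) (t : Finset α) (w : V) (hw : w ≠ v) :
    (t.filter fun e => (if h : ep e = v then (⟨u, h0⟩ : {w : V // w ≠ v}) else ⟨ep e, h⟩) = ⟨w, hw⟩).card
      = if w = u then (t.filter fun e => ep e = u).card + (t.filter fun e => ep e = v).card
        else (t.filter fun e => ep e = w).card := by
  by_cases hwu : w = u
  · subst hwu
    rw [if_pos rfl]
    have hfil : (t.filter fun e =>
        (if h : ep e = v then (⟨w, h0⟩ : {x : V // x ≠ v}) else ⟨ep e, h⟩) = ⟨w, hw⟩)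
        = (t.filter fun e => ep e = w) ∪ (t.filter fun e => ep e = v) := by
      rw [← Finset.filter_or]
      apply Finset.filter_congr
      intro e _
      by_cases h : ep e = v
      · simp [h]
      · simp [h, Subtype.ext_iff]
    rw [hfil, Finset.card_union_of_disjoint]
    rw [Finset.disjoint_left]
    intro a ha hb
    simp only [Finset.mem_filter] at ha hb
    exact h0 (ha.2 ▸ hb.2 ▸ rfl)
  · rw [if_neg hwu]
    have hfil : (t.filter fun e =>
        (if h : ep e = v then (⟨u, h0⟩ : {x : V // x ≠ v}) else ⟨ep e, h⟩) = ⟨w, hw⟩)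
        = (t.filter fun e => ep e = w) := by
      apply Finset.filter_congr
      intro e _
      by_cases h : ep e = v
      · simp only [h, dif_pos, Subtype.mk.injEq]
        constructor
        · intro hh; exact absurd hh.symm hwu
        · intro hh; exact absurd hh.symm hw
      · simp [h, Subtype.ext_iff]
    rw [hfil]

lemma deg_con {α V : Type} [DecidableEq α] [DecidableEq V] {u v : V} (h0 : u ≠ v)
    (ep1 ep2 : α → V) (t : Finset α) (i : {x : V // x ≠ v}) :
    degM (fun e => if h : ep1 e = v then (⟨u, h0⟩ : {x : V // x ≠ v}) else ⟨ep1 e, h⟩)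
         (fun e => if h : ep2 e = v then (⟨u, h0⟩ : {x : V // x ≠ v}) else ⟨ep2 e, h⟩) i t
      = if i.1 = u then degM ep1 ep2 u t + degM ep1 ep2 v t else degM ep1 ep2 i.1 t := by
  obtain ⟨w, hw⟩ := i
  unfold degM
  rw [filt_con h0 ep1 t w hw, filt_con h0 ep2 t w hw]
  by_cases h : w = u <;> simp only [h, if_true, if_false] <;> omega

lemma filt_map {E V : Type} [DecidableEq V] [DecidableEq E] {e0 : E} (ep : E → V) (i : V)
    (t : Finset {e : E // e ≠ e0}) :
    ((t.map (Function.Embedding.subtype _)).filter fun e => ep e = i).card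
      = (t.filter fun e => ep e.1 = i).card := by
  rw [Finset.filter_map, Finset.card_map]
  rfl

lemma deg_map {E V : Type} [DecidableEq V] [DecidableEq E] {e0 : E} (ep1 ep2 : E → V) (i : V)
    (t : Finset {e : E // e ≠ e0}) :
    degM ep1 ep2 i (t.map (Function.Embedding.subtype _))
      = degM (fun e => ep1 e.1) (fun e => ep2 e.1) i t := by
  unfold degM
  rw [filt_map ep1 i t, filt_map ep2 i t]

lemma notmem_map {E : Type} [DecidableEq E] {e0 : E} (t : Finset {e : E // e ≠ e0}) :
    e0 ∉ t.map (Function.Embedding.subtype _) := by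
  intro ht
  rcases Finset.mem_map.1 ht with ⟨a, _, ha⟩
  exact a.2 ha

lemma deg_insert {E V : Type} [DecidableEq V] [DecidableEq E] {e0 : E} (ep1 ep2 : E → V) (i : V)
    (t : Finset {e : E // e ≠ e0}) :
    degM ep1 ep2 i (insert e0 (t.map (Function.Embedding.subtype _)))
      = degM (fun e => ep1 e.1) (fun e => ep2 e.1) i t
        + ((if ep1 e0 = i then 1 else 0) + (if ep2 e0 = i then 1 else 0)) := by
  have hnm := notmem_map t
  have hci : ∀ s' : Finset E, s' ⊆ t.map (Function.Embedding.subtype _) →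
      (insert e0 s').card = s'.card + 1 := fun s' hs =>
    Finset.card_insert_of_notMem (fun hm => hnm (hs hm))
  unfold degM
  rw [Finset.filter_insert, Finset.filter_insert,
    ← filt_map (e0 := e0) ep1 i t, ← filt_map (e0 := e0) ep2 i t]
  split_ifs <;>
    (try rw [hci _ (Finset.filter_subset _ _)]) <;>
    (try rw [hci _ (Finset.filter_subset _ _)]) <;> omega

lemma prod_split2 {V : Type} [Fintype V] [DecidableEq V] {u v : V} (huv : u ≠ v) (g : V → ℝ) :
    ∏ i : V, g i = g u * (g v * ∏ i ∈ (Finset.univ.erase u).erase v, g i) := by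
  rw [← Finset.mul_prod_erase _ g (Finset.mem_univ u),
    ← Finset.mul_prod_erase _ g (Finset.mem_erase.2 ⟨huv.symm, Finset.mem_univ v⟩)]

lemma keyB {V E : Type} [Fintype V] [DecidableEq V] [Fintype E] [DecidableEq E]
    (ep1 ep2 : E → V) (e0 : E) (h0 : ep1 e0 ≠ ep2 e0) (β x : ℝ)
    (t : Finset {e : E // e ≠ e0}) :
    β ^ (t.map (Function.Embedding.subtype _)).card
        * ∏ i : V, chebF (degM ep1 ep2 i (t.map (Function.Embedding.subtype _))) x
      + β ^ (insert e0 (t.map (Function.Embedding.subtype _))).card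
        * ∏ i : V, chebF (degM ep1 ep2 i (insert e0 (t.map (Function.Embedding.subtype _)))) x
    = (1 - β) * (β ^ t.card * ∏ i : V, chebF (degM (fun e => ep1 e.1) (fun e => ep2 e.1) i t) x)
      + β * (β ^ t.card * ∏ i : {w : V // w ≠ ep2 e0},
          chebF (degM
            (fun e : {e : E // e ≠ e0} =>
              if h : ep1 e.1 = ep2 e0 then ⟨ep1 e0, h0⟩ else ⟨ep1 e.1, h⟩)
            (fun e : {e : E // e ≠ e0} =>
              if h : ep2 e.1 = ep2 e0 then ⟨ep1 e0, h0⟩ else ⟨ep2 e.1, h⟩) i t) x) := by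
  set Du := degM (fun e : {e : E // e ≠ e0} => ep1 e.1) (fun e => ep2 e.1) (ep1 e0) t with hDu
  set Dv := degM (fun e : {e : E // e ≠ e0} => ep1 e.1) (fun e => ep2 e.1) (ep2 e0) t with hDv
  set P := ∏ i ∈ (Finset.univ.erase (ep1 e0)).erase (ep2 e0),
      chebF (degM (fun e : {e : E // e ≠ e0} => ep1 e.1) (fun e => ep2 e.1) i t) x with hP
  have hcard : (insert e0 (t.map (Function.Embedding.subtype _))).card = t.card + 1 := by
    rw [Finset.card_insert_of_notMem (notmem_map t), Finset.card_map]
  -- the deleted-graph product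
  have h1 : ∏ i : V, chebF (degM (fun e : {e : E // e ≠ e0} => ep1 e.1) (fun e => ep2 e.1) i t) x
      = chebF Du x * (chebF Dv x * P) := by
    rw [prod_split2 h0 (fun i => chebF (degM (fun e : {e : E // e ≠ e0} => ep1 e.1) (fun e => ep2 e.1) i t) x)]
  -- the product for the set with e0 inserted
  have h3 : ∏ i : V, chebF (degM ep1 ep2 i (insert e0 (t.map (Function.Embedding.subtype _)))) x
      = chebF (Du + 1) x * (chebF (Dv + 1) x * P) := by
    have hQ : ∏ i ∈ (Finset.univ.erase (ep1 e0)).erase (ep2 e0),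
        chebF (degM ep1 ep2 i (insert e0 (t.map (Function.Embedding.subtype _)))) x = P := by
      apply Finset.prod_congr rfl
      intro i hi
      have hiv : i ≠ ep2 e0 := (Finset.mem_erase.1 hi).1
      have hiu : i ≠ ep1 e0 := (Finset.mem_erase.1 (Finset.mem_erase.1 hi).2).1
      rw [deg_insert ep1 ep2 i t, if_neg (fun h => hiu h.symm), if_neg (fun h => hiv h.symm)]
      norm_num
    rw [prod_split2 h0
      (fun i => chebF (degM ep1 ep2 i (insert e0 (t.map (Function.Embedding.subtype _)))) x)]
    rw [deg_insert ep1 ep2 (ep1 e0) t, deg_insert ep1 ep2 (ep2 e0) t,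
      if_pos rfl, if_pos rfl, if_neg (fun h => h0 h.symm), if_neg h0, hQ]
  -- the contracted-graph product
  have h4 : (∏ i : {w : V // w ≠ ep2 e0},
        chebF (degM
          (fun e : {e : E // e ≠ e0} =>
            if h : ep1 e.1 = ep2 e0 then ⟨ep1 e0, h0⟩ else ⟨ep1 e.1, h⟩)
          (fun e : {e : E // e ≠ e0} =>
            if h : ep2 e.1 = ep2 e0 then ⟨ep1 e0, h0⟩ else ⟨ep2 e.1, h⟩) i t) x)
      = chebF (Du + Dv) x * P := by
    have hg : ∀ i : {w : V // w ≠ ep2 e0},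
        chebF (degM
          (fun e : {e : E // e ≠ e0} =>
            if h : ep1 e.1 = ep2 e0 then ⟨ep1 e0, h0⟩ else ⟨ep1 e.1, h⟩)
          (fun e : {e : E // e ≠ e0} =>
            if h : ep2 e.1 = ep2 e0 then ⟨ep1 e0, h0⟩ else ⟨ep2 e.1, h⟩) i t) x
        = (fun w : V => chebF (if w = ep1 e0 then Du + Dv
            else degM (fun e : {e : E // e ≠ e0} => ep1 e.1) (fun e => ep2 e.1) w t) x) i.1 := by
      intro i
      rw [deg_con h0 (fun e : {e : E // e ≠ e0} => ep1 e.1) (fun e => ep2 e.1) t i]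
    rw [Finset.prod_congr rfl (fun i _ => hg i),
      ← Finset.prod_subtype (p := fun w : V => w ≠ ep2 e0) (Finset.univ.erase (ep2 e0))
        (fun w => by simp [Finset.mem_erase])
        (fun w => chebF (if w = ep1 e0 then Du + Dv
          else degM (fun e : {e : E // e ≠ e0} => ep1 e.1) (fun e => ep2 e.1) w t) x),
      ← Finset.mul_prod_erase _ _ (Finset.mem_erase.2 ⟨h0, Finset.mem_univ _⟩),
      if_pos rfl]
    congr 1
    rw [Finset.erase_right_comm]
    apply Finset.prod_congr rfl
    intro i hi
    rw [if_neg (Finset.mem_erase.1 (Finset.mem_erase.1 hi).2).1]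
  -- put it together
  simp only [deg_map, Finset.card_map, hcard, h1, h3, h4]
  rw [pow_succ]
  have hadd := chebF_add x Du Dv
  linear_combination (-(β ^ t.card * β * P)) * hadd

lemma keyA {E : Type} [Fintype E] [DecidableEq E] (e0 : E) (F : Finset E → ℝ) :
    ∑ s : Finset E, F s
      = ∑ t : Finset {e : E // e ≠ e0},
          (F (t.map (Function.Embedding.subtype _))
            + F (insert e0 (t.map (Function.Embedding.subtype _)))) := by
  classical
  have hsm : ∀ s : Finset E, e0 ∉ s →
      (s.subtype (· ≠ e0)).map (Function.Embedding.subtype _) = s := by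
    intro s hs
    rw [Finset.subtype_map]
    exact Finset.filter_eq_self.2 fun a ha h => hs (h ▸ ha)
  have hms : ∀ t : Finset {e : E // e ≠ e0},
      (t.map (Function.Embedding.subtype _)).subtype (· ≠ e0) = t := by
    intro t
    ext a
    simp only [Finset.mem_subtype, Finset.mem_map, Function.Embedding.coe_subtype]
    constructor
    · rintro ⟨b, hb, hba⟩
      rwa [show b = a from Subtype.ext hba] at hb
    · intro h; exact ⟨a, h, rfl⟩
  rw [Finset.sum_add_distrib,
    ← Finset.sum_filter_add_sum_filter_not Finset.univ (fun s : Finset E => e0 ∉ s) F]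
  congr 1
  · refine Finset.sum_bij' (fun s _ => s.subtype (· ≠ e0))
      (fun t _ => t.map (Function.Embedding.subtype _)) ?_ ?_ ?_ ?_ ?_
    · intro s _; exact Finset.mem_univ _
    · intro t _
      simp only [Finset.mem_filter, Finset.mem_univ, true_and]
      exact notmem_map t
    · intro s hs
      exact hsm s (by simpa using hs)
    · intro t _; exact hms t
    · intro s hs
      exact congrArg F (hsm s (by simpa using hs)).symm
  · refine Finset.sum_bij' (fun s _ => (s.erase e0).subtype (· ≠ e0))
      (fun t _ => insert e0 (t.map (Function.Embedding.subtype _))) ?_ ?_ ?_ ?_ ?_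
    · intro s _; exact Finset.mem_univ _
    · intro t _
      simp only [Finset.mem_filter, Finset.mem_univ, true_and, not_not]
      exact Finset.mem_insert_self _ _
    · intro s hs
      beta_reduce
      rw [hsm (s.erase e0) (Finset.notMem_erase _ _)]
      exact Finset.insert_erase (by simpa using hs)
    · intro t _
      beta_reduce
      rw [Finset.erase_insert (notmem_map t), hms t]
    · intro s hs
      refine congrArg F ?_
      rw [hsm (s.erase e0) (Finset.notMem_erase _ _)]
      exact (Finset.insert_erase (by simpa using hs)).symm


theorem stmt_13 {V E : Type} [Fintype V] [DecidableEq V] [Fintype E] [DecidableEq E]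
    -- a finite multigraph with edge endpoints `ep1 e`, `ep2 e`
    (ep1 ep2 : E → V)
    -- a non-loop edge `e0`
    (e0 : E) (h0 : ep1 e0 ≠ ep2 e0)
    (β ξ : ℝ) (hξ : 0 < ξ) :
    thetaM ep1 ep2 β ξ =
      -- deletion `G ∖ e0`: same vertices, edges `E ∖ {e0}`
      (1 - β) * thetaM (fun e : {e : E // e ≠ e0} => ep1 e.1) (fun e => ep2 e.1) β ξ
      -- contraction `G / e0`: the endpoint `ep2 e0` is identified with `ep1 e0`
      + β * thetaM (V := {w : V // w ≠ ep2 e0})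
          (fun e : {e : E // e ≠ e0} =>
            if h : ep1 e.1 = ep2 e0 then ⟨ep1 e0, h0⟩ else ⟨ep1 e.1, h⟩)
          (fun e : {e : E // e ≠ e0} =>
            if h : ep2 e.1 = ep2 e0 then ⟨ep1 e0, h0⟩ else ⟨ep2 e.1, h⟩) β ξ := by
  classical
  rw [thetaM, thetaM, thetaM,
    keyA e0 (fun s => β ^ s.card * ∏ i : V, chebF (degM ep1 ep2 i s) (ξ - ξ⁻¹)),
    Finset.mul_sum, Finset.mul_sum, ← Finset.sum_add_distrib]
  apply Finset.sum_congr rfl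
  intro t _
  exact keyB ep1 ep2 e0 h0 β (ξ - ξ⁻¹) t
end
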